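/- arXiv:2005.06029 — 3 statements merged into one kernel-verified Lean document; each statement's English description precedes it below -/
import Mathlib

section
/- Let n ≥ 1, p ∈ [1,∞), α > 0 and 0 < λ < 1. If f ∈ X^p is nonnegative and satisfies f ≥ (J_α f)^λ a.e. on ℝ^n×ℝ and f = 0 a.e. on ℝ^n×(−∞,0), then f = 0 a.e. on ℝ^n×ℝ. -/
open MeasureTheory Real Set
open scoped ENNReal
noncomputable def Phi (n : ℕ) (α : ℝ) (x : EuclideanSpace ℝ (Fin n)) (t : ℝ) : ℝ :=
  if 0 < t then
    (t ^ (α - 1) / Real.Gamma α) * (4 * Real.pi * t) ^ (-(n : ℝ) / 2) *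
      Real.exp (-‖x‖ ^ 2 / (4 * t))
  else 0
noncomputable def J (n : ℕ) (α : ℝ) (f : EuclideanSpace ℝ (Fin n) → ℝ → ℝ)
    (x : EuclideanSpace ℝ (Fin n)) (t : ℝ) : ℝ≥0∞ :=
  ∫⁻ τ in Set.Iio t, ∫⁻ ξ, ENNReal.ofReal (Phi n α (x - ξ) (t - τ) * f ξ τ)
def MemXp (n : ℕ) (p : ℝ≥0∞) (f : EuclideanSpace ℝ (Fin n) → ℝ → ℝ) : Prop :=
  Measurable (Function.uncurry f) ∧
  ∀ T : ℝ, eLpNorm (Function.uncurry f) p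
    (volume.restrict {q : EuclideanSpace ℝ (Fin n) × ℝ | q.2 < T}) < ⊤
private lemma Phi_nonneg {n : ℕ} {α : ℝ} (hα : 0 < α) (x : EuclideanSpace ℝ (Fin n)) (t : ℝ) :
    0 ≤ Phi n α x t := by
  unfold Phi
  split_ifs with h
  · have hg := Real.Gamma_pos_of_pos hα
    positivity
  · exact le_rfl

private lemma J_mono {n : ℕ} {α : ℝ} (hα : 0 < α) (f g : EuclideanSpace ℝ (Fin n) → ℝ → ℝ)
    (hle : ∀ᵐ q : EuclideanSpace ℝ (Fin n) × ℝ, g q.1 q.2 ≤ f q.1 q.2)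
    (x : EuclideanSpace ℝ (Fin n)) (t : ℝ) : J n α g x t ≤ J n α f x t := by
  rw [Measure.volume_eq_prod] at hle
  have hswap : ∀ᵐ q : ℝ × EuclideanSpace ℝ (Fin n) ∂((volume : Measure ℝ).prod volume),
      g q.2 q.1 ≤ f q.2 q.1 :=
    Measure.measurePreserving_swap.quasiMeasurePreserving.ae hle
  have h2 := Measure.ae_ae_of_ae_prod hswap
  unfold J
  refine lintegral_mono_ae ?_
  filter_upwards [ae_restrict_of_ae h2] with τ hτ
  refine lintegral_mono_ae ?_
  filter_upwards [hτ] with ξ hξ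
  exact ENNReal.ofReal_le_ofReal (mul_le_mul_of_nonneg_left hξ (Phi_nonneg hα _ _))

private lemma quad_ineq {lam : ℝ} (hl0 : 0 < lam) (hl1 : lam < 1) (a d : ℝ)
    (ha : 0 ≤ a) (hd : 0 ≤ d) :
    (a + d) ^ 2 ≤ (1 + lam) / (2 * lam) * a ^ 2 + (1 + lam) / (1 - lam) * d ^ 2 := by
  set η := (1 - lam) / (2 * lam) with hηdef
  have hη : 0 < η := by
    apply div_pos <;> linarith
  have hlne : lam ≠ 0 := ne_of_gt hl0
  have h1mne : (1:ℝ) - lam ≠ 0 := by linarith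
  have key : 2 * a * d * η ≤ η ^ 2 * a ^ 2 + d ^ 2 := by nlinarith [sq_nonneg (η * a - d)]
  have h2 : 2 * a * d ≤ η * a ^ 2 + d ^ 2 / η := by
    have h3 : (2 * a * d) * η ≤ (η * a ^ 2 + d ^ 2 / η) * η := by
      have : (η * a ^ 2 + d ^ 2 / η) * η = η ^ 2 * a ^ 2 + d ^ 2 := by
        field_simp
      rw [this]; exact key
    exact le_of_mul_le_mul_right h3 hη
  have e1 : (1 + lam) / (2 * lam) = 1 + η := by rw [hηdef]; field_simp; ring
  have e2 : (1 + lam) / (1 - lam) = 1 + 1 / η := by rw [hηdef, one_div_div]; field_simp; ring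
  rw [e1, e2]
  have hd2 : d ^ 2 * (1 / η) = d ^ 2 / η := by ring
  nlinarith [h2]

private lemma sq_add_le_two (a d : ℝ) : (a + d) ^ 2 ≤ 2 * a ^ 2 + 2 * d ^ 2 := by
  nlinarith [sq_nonneg (a - d)]

set_option maxHeartbeats 1600000 in
theorem super_problem_sublinear_nonexistence (n : ℕ) (hn : 1 ≤ n) (p α lam : ℝ)
    (hp : 1 ≤ p) (hα : 0 < α) (hlam0 : 0 < lam) (hlam1 : lam < 1)
    (f : EuclideanSpace ℝ (Fin n) → ℝ → ℝ)
    (hf : MemXp n (ENNReal.ofReal p) f) (hpos : ∀ x t, 0 ≤ f x t)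
    (hineq : ∀ᵐ q : EuclideanSpace ℝ (Fin n) × ℝ,
      (J n α f q.1 q.2) ^ lam ≤ ENNReal.ofReal (f q.1 q.2))
    (hzero : ∀ᵐ q : EuclideanSpace ℝ (Fin n) × ℝ, q.2 < 0 → f q.1 q.2 = 0) :
    ∀ᵐ q : EuclideanSpace ℝ (Fin n) × ℝ, f q.1 q.2 = 0 := by
  classical
  by_contra hcon
  obtain ⟨hfm, hfLp⟩ := hf
  have hΓ : 0 < Real.Gamma α := Real.Gamma_pos_of_pos hα
  have hπ : (0:ℝ) < Real.pi := Real.pi_pos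
  haveI hnt : Nontrivial (EuclideanSpace ℝ (Fin n)) := by
    apply Module.nontrivial_of_finrank_pos (R := ℝ)
    rw [finrank_euclideanSpace_fin]
    exact hn
  -- Step A : a positive measure set where f is bounded below
  obtain ⟨ε, Rr, A, hε, hRr, hAmeas, hApos, hAfin, hAsub⟩ :
      ∃ (ε Rr : ℝ) (A : Set (EuclideanSpace ℝ (Fin n) × ℝ)), 0 < ε ∧ 1 ≤ Rr ∧
        MeasurableSet A ∧ 0 < volume A ∧ volume A < ⊤ ∧
        A ⊆ {q | ε ≤ f q.1 q.2 ∧ q.2 ∈ Icc 0 Rr ∧ ‖q.1‖ ≤ Rr} := by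
    -- the set where f ≠ 0 (hence > 0) and t ≥ 0 has positive measure
    have hne : volume {q : EuclideanSpace ℝ (Fin n) × ℝ | f q.1 q.2 ≠ 0 ∧ 0 ≤ q.2} ≠ 0 := by
      intro h0
      apply hcon
      have h1 : ∀ᵐ q : EuclideanSpace ℝ (Fin n) × ℝ, ¬(f q.1 q.2 ≠ 0 ∧ 0 ≤ q.2) := by
        rw [ae_iff]; simpa using h0
      filter_upwards [h1, hzero] with q h1q h2q
      rcases lt_or_ge q.2 0 with h | h
      · exact h2q h
      · by_contra hne'; exact h1q ⟨hne', h⟩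
    set Am : ℕ → ℕ → Set (EuclideanSpace ℝ (Fin n) × ℝ) := fun m R =>
      {q | 1 / (m + 1 : ℝ) ≤ f q.1 q.2 ∧ q.2 ∈ Icc (0:ℝ) (R+1) ∧ ‖q.1‖ ≤ R + 1} with hAm
    have hAmmeas : ∀ m R, MeasurableSet (Am m R) := by
      intro m R
      apply MeasurableSet.inter
      · exact hfm measurableSet_Ici
      apply MeasurableSet.inter
      · exact measurable_snd measurableSet_Icc
      · exact (measurable_norm.comp measurable_fst) measurableSet_Iic
    have hcover : {q : EuclideanSpace ℝ (Fin n) × ℝ | f q.1 q.2 ≠ 0 ∧ 0 ≤ q.2} ⊆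
        ⋃ (m : ℕ) (R : ℕ), Am m R := by
      rintro q ⟨hq1, hq2⟩
      have hfq : 0 < f q.1 q.2 := lt_of_le_of_ne (hpos _ _) (Ne.symm hq1)
      obtain ⟨m, hm⟩ := exists_nat_one_div_lt hfq
      obtain ⟨R, hR⟩ := exists_nat_gt (max q.2 ‖q.1‖)
      simp only [mem_iUnion]
      refine ⟨m, R, hm.le, ⟨hq2, ?_⟩, ?_⟩
      · have := (max_lt_iff.mp hR).1; linarith
      · have := (max_lt_iff.mp hR).2; linarith
    have hex : ∃ m R : ℕ, volume (Am m R) ≠ 0 := by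
      by_contra hforall
      push_neg at hforall
      apply hne
      refine measure_mono_null hcover ?_
      refine (measure_iUnion_null_iff).2 fun m => (measure_iUnion_null_iff).2 fun R => ?_
      exact hforall m R
    obtain ⟨m, R, hmR⟩ := hex
    refine ⟨1 / (m + 1 : ℝ), (R : ℝ) + 1, Am m R, by positivity, by
        have : (0:ℝ) ≤ R := Nat.cast_nonneg R; linarith, hAmmeas m R,
      pos_iff_ne_zero.mpr hmR, ?_, fun q hq => ⟨hq.1, hq.2.1, hq.2.2⟩⟩
    -- finiteness
    have hsub2 : Am m R ⊆ (Metric.closedBall (0 : EuclideanSpace ℝ (Fin n)) (R+1)) ×ˢ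
        (Icc (0:ℝ) (R+1)) := by
      rintro q ⟨_, hq2, hq3⟩
      exact ⟨by simpa [Metric.mem_closedBall, dist_zero_right] using hq3, hq2⟩
    calc volume (Am m R) ≤ _ := measure_mono hsub2
    _ < ⊤ := by
      rw [Measure.volume_eq_prod, Measure.prod_prod]
      exact ENNReal.mul_lt_top measure_closedBall_lt_top (by simp [Real.volume_Icc])

  -- Constants
  set lam' : ℝ := (1 + lam) / 2 with hlam'def
  have hlam'0 : 0 < lam' := by rw [hlam'def]; linarith
  have hlam'1 : lam' < 1 := by rw [hlam'def]; linarith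
  have hlamlt : lam < lam' := by rw [hlam'def]; linarith
  have hloglam' : Real.log lam' < 0 := Real.log_neg hlam'0 hlam'1
  set κ : ℝ := (1 + lam) / (1 - lam) with hκdef
  have hκ0 : 0 < κ := by apply div_pos <;> linarith
  set θ : ℝ := α + n + 1 with hθdef
  have hθ0 : 0 < θ := by
    have : (0:ℝ) ≤ n := Nat.cast_nonneg n
    rw [hθdef]; linarith
  have hn0 : (0:ℝ) < n := by exact_mod_cast hn
  set ε2 : ℝ := ((1 - lam) * n * (-Real.log lam')) / (4 * p * lam * θ) with hε2def
  have hp0 : (0:ℝ) < p := by linarith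
  have hε2pos : 0 < ε2 := by
    rw [hε2def]
    apply div_pos
    · have : 0 < -Real.log lam' := by linarith
      apply mul_pos (mul_pos (by linarith) hn0) this
    · positivity
  set ρ : ℝ := Real.exp (-ε2) with hρdef
  have hρ0 : 0 < ρ := Real.exp_pos _
  have hρ1 : ρ < 1 := by rw [hρdef]; exact Real.exp_lt_one_iff.mpr (by linarith)
  have hlogρ : Real.log ρ = -ε2 := by rw [hρdef, Real.log_exp]
  set T1 : ℝ := Rr + 1 with hT1def
  set T2 : ℝ := Rr + 2 with hT2def
  have hT2T1 : T2 = T1 + 1 := by rw [hT1def, hT2def]; ring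
  set s : ℕ → ℝ := fun k => T1 + (1 - ρ ^ k) / 2 with hsdef
  set δ : ℕ → ℝ := fun k => (1 - ρ) / 2 * ρ ^ k with hδdef
  have hδpos : ∀ k, 0 < δ k := fun k => by
    rw [hδdef]; simp only []; have : 0 < 1 - ρ := by linarith
    positivity
  have hs_succ : ∀ k, s (k + 1) = s k + δ k := by
    intro k; rw [hsdef, hδdef]; simp only []; rw [pow_succ]; ring
  have hs_lt : ∀ k, s k < T1 + 1 / 2 := by
    intro k
    rw [hsdef]
    have h1 : 0 < ρ ^ k := pow_pos hρ0 k
    simp only []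
    linarith
  have hs_ge : ∀ k, T1 ≤ s k := by
    intro k
    have h1 : ρ ^ k ≤ 1 := pow_le_one₀ hρ0.le hρ1.le
    rw [hsdef]; simp only []; linarith
  set b : ℕ → ℝ := fun k => lam / 2 * lam' ^ k with hbdef
  have hbpos : ∀ k, 0 < b k := fun k => by
    rw [hbdef]; simp only []; positivity
  have hble : ∀ k, b k ≤ 1 / 2 := by
    intro k
    have h1 : lam' ^ k ≤ 1 := pow_le_one₀ hlam'0.le hlam'1.le
    rw [hbdef]; simp only []
    calc lam / 2 * lam' ^ k ≤ lam / 2 * 1 :=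
      mul_le_mul_of_nonneg_left h1 (by linarith)
    _ ≤ 1 / 2 := by linarith
  have hb_succ : ∀ k, b (k + 1) = lam' * b k := by
    intro k; rw [hbdef]; simp only []; rw [pow_succ]; ring
  set VB : ℝ := (volume (Metric.ball (0 : EuclideanSpace ℝ (Fin n)) 1)).toReal with hVBdef
  have hVBpos : 0 < VB := by
    rw [hVBdef]
    apply ENNReal.toReal_pos
    · exact (Metric.measure_ball_pos volume (0 : EuclideanSpace ℝ (Fin n)) one_pos).ne'
    · exact measure_ball_lt_top.ne
  have hVBeq : volume (Metric.ball (0 : EuclideanSpace ℝ (Fin n)) 1) = ENNReal.ofReal VB := by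
    rw [hVBdef, ENNReal.ofReal_toReal measure_ball_lt_top.ne]
  set a0 : ℝ := (volume A).toReal with ha0def
  have ha0pos : 0 < a0 := ENNReal.toReal_pos hApos.ne' hAfin.ne
  have hA0eq : volume A = ENNReal.ofReal a0 := by
    rw [ha0def, ENNReal.ofReal_toReal hAfin.ne]
  set cA : ℝ := min 1 ((Rr + 2) ^ (α - 1)) * (4 * Real.pi * (Rr + 2)) ^ (-(n:ℝ) / 2) *
      Real.exp (-(Rr ^ 2) / 2) / Real.Gamma α with hcAdef
  have hRr2 : (0:ℝ) < Rr + 2 := by linarith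
  have hcApos : 0 < cA := by
    rw [hcAdef]
    have h1 : (0:ℝ) < min 1 ((Rr + 2) ^ (α - 1)) :=
      lt_min one_pos (Real.rpow_pos_of_pos hRr2 _)
    have h2 : (0:ℝ) < (4 * Real.pi * (Rr + 2)) ^ (-(n:ℝ) / 2) :=
      Real.rpow_pos_of_pos (by positivity) _
    positivity
  set M : ℝ := (4 * Real.pi) ^ (-(n:ℝ) / 2) * Real.exp (-(1/4) - κ / 2) / Real.Gamma α
    with hMdef
  have hMpos : 0 < M := by
    rw [hMdef]
    have h2 : (0:ℝ) < (4 * Real.pi) ^ (-(n:ℝ) / 2) := Real.rpow_pos_of_pos (by positivity) _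
    positivity
  set D2 : ℝ := M * VB * ((1 - ρ) / 4) ^ θ with hD2def
  have hD2pos : 0 < D2 := by
    rw [hD2def]
    have h2 : (0:ℝ) < ((1 - ρ) / 4) ^ θ := Real.rpow_pos_of_pos (by linarith) _
    positivity
  set C0 : ℝ := (ε * cA * a0) ^ lam with hC0def
  have hC0pos : 0 < C0 := by
    rw [hC0def]; exact Real.rpow_pos_of_pos (by positivity) _
  set v : ℝ := lam * θ * Real.log ρ / (1 - lam) with hvdef
  set u0 : ℝ := min (Real.log C0) ((lam * Real.log D2 - v) / (1 - lam)) with hu0def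
  clear_value lam' κ θ ε2 ρ T1 T2 s δ b
  -- Base lower bound on J from the set A
  have base_J : ∀ (x : EuclideanSpace ℝ (Fin n)) (t : ℝ), T1 < t → t ≤ T2 →
      ENNReal.ofReal (ε * cA * a0 * Real.exp (-(1/2) * ‖x‖ ^ 2)) ≤ J n α f x t := by
    intro x t ht1 ht2
    set cst : ℝ≥0∞ := ENNReal.ofReal (ε * cA * Real.exp (-(1/2) * ‖x‖ ^ 2)) with hcstdef
    have hpt : ∀ ξ τ, cst * A.indicator (fun _ => (1:ℝ≥0∞)) (ξ, τ) ≤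
        ENNReal.ofReal (Phi n α (x - ξ) (t - τ) * f ξ τ) := by
      intro ξ τ
      by_cases hq : (ξ, τ) ∈ A
      · rw [Set.indicator_of_mem hq, mul_one, hcstdef]
        apply ENNReal.ofReal_le_ofReal
        obtain ⟨hfq, ⟨hτ0, hτR⟩, hξR⟩ := hAsub hq
        have hu1 : (1:ℝ) < t - τ := by rw [hT1def] at ht1; linarith
        have hu2 : t - τ ≤ Rr + 2 := by rw [hT2def] at ht2; linarith
        have hu0 : (0:ℝ) < t - τ := by linarith
        rw [Phi, if_pos hu0]
        have hf1 : min 1 ((Rr + 2) ^ (α - 1)) ≤ (t - τ) ^ (α - 1) := by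
          rcases le_or_gt 1 α with hα1 | hα1
          · refine le_trans (min_le_left _ _) ?_
            calc (1:ℝ) = 1 ^ (α - 1) := (Real.one_rpow _).symm
            _ ≤ (t - τ) ^ (α - 1) := Real.rpow_le_rpow zero_le_one hu1.le (by linarith)
          · refine le_trans (min_le_right _ _) ?_
            exact Real.rpow_le_rpow_of_nonpos hu0 hu2 (by linarith)
        have hf2 : (4 * Real.pi * (Rr + 2)) ^ (-(n:ℝ) / 2) ≤
            (4 * Real.pi * (t - τ)) ^ (-(n:ℝ) / 2) := by
          have hb1 : 4 * Real.pi * (t - τ) ≤ 4 * Real.pi * (Rr + 2) :=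
            mul_le_mul_of_nonneg_left hu2 (by positivity)
          have hb2 : -(n:ℝ) / 2 ≤ 0 := by
            rw [neg_div]
            exact neg_nonpos.mpr (by positivity)
          exact Real.rpow_le_rpow_of_nonpos (by positivity) hb1 hb2
        have hxx : ‖x - ξ‖ ^ 2 ≤ 2 * ‖x‖ ^ 2 + 2 * Rr ^ 2 := by
          have h4 := norm_sub_le x ξ
          have h5 : ‖x - ξ‖ ^ 2 ≤ (‖x‖ + ‖ξ‖) ^ 2 :=
            pow_le_pow_left₀ (norm_nonneg _) h4 2
          have h6 := sq_add_le_two ‖x‖ ‖ξ‖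
          have h7 : ‖ξ‖ ^ 2 ≤ Rr ^ 2 := pow_le_pow_left₀ (norm_nonneg _) hξR 2
          linarith
        have hf3 : Real.exp (-(Rr ^ 2) / 2) * Real.exp (-(1/2) * ‖x‖ ^ 2) ≤
            Real.exp (-‖x - ξ‖ ^ 2 / (4 * (t - τ))) := by
          rw [← Real.exp_add]
          apply Real.exp_le_exp.mpr
          have h5 : ‖x - ξ‖ ^ 2 / (4 * (t - τ)) ≤ ‖x - ξ‖ ^ 2 / 4 := by
            apply div_le_div_of_nonneg_left (by positivity) (by norm_num) (by linarith)
          have h7 : -‖x - ξ‖ ^ 2 / (4 * (t - τ)) = -(‖x - ξ‖ ^ 2 / (4 * (t - τ))) := by ring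
          rw [h7]
          linarith
        have hΦge : cA * Real.exp (-(1/2) * ‖x‖ ^ 2) ≤
            (t - τ) ^ (α - 1) / Real.Gamma α * (4 * Real.pi * (t - τ)) ^ (-(n:ℝ) / 2) *
              Real.exp (-‖x - ξ‖ ^ 2 / (4 * (t - τ))) := by
          have hmin0 : (0:ℝ) ≤ min 1 ((Rr + 2) ^ (α - 1)) :=
            le_min zero_le_one (Real.rpow_pos_of_pos hRr2 _).le
          have h2n : (0:ℝ) ≤ (4 * Real.pi * (Rr + 2)) ^ (-(n:ℝ) / 2) :=
            (Real.rpow_pos_of_pos (by positivity) _).le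
          have hprod : min 1 ((Rr + 2) ^ (α - 1)) * ((4 * Real.pi * (Rr + 2)) ^ (-(n:ℝ) / 2) *
              (Real.exp (-(Rr ^ 2) / 2) * Real.exp (-(1/2) * ‖x‖ ^ 2))) ≤
              (t - τ) ^ (α - 1) * ((4 * Real.pi * (t - τ)) ^ (-(n:ℝ) / 2) *
              Real.exp (-‖x - ξ‖ ^ 2 / (4 * (t - τ)))) := by
            apply mul_le_mul hf1 ?_ (by positivity) ?_
            · exact mul_le_mul hf2 hf3 (by positivity) (Real.rpow_pos_of_pos (by positivity) _).le
            · exact (Real.rpow_pos_of_pos hu0 _).le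
          have hlhs : cA * Real.exp (-(1/2) * ‖x‖ ^ 2) =
              min 1 ((Rr + 2) ^ (α - 1)) * ((4 * Real.pi * (Rr + 2)) ^ (-(n:ℝ) / 2) *
              (Real.exp (-(Rr ^ 2) / 2) * Real.exp (-(1/2) * ‖x‖ ^ 2))) / Real.Gamma α := by
            rw [hcAdef]; ring
          rw [hlhs]
          calc _ ≤ ((t - τ) ^ (α - 1) * ((4 * Real.pi * (t - τ)) ^ (-(n:ℝ) / 2) *
              Real.exp (-‖x - ξ‖ ^ 2 / (4 * (t - τ))))) / Real.Gamma α := by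
                exact (div_le_div_iff_of_pos_right hΓ).mpr hprod
          _ = _ := by ring
        calc ε * cA * Real.exp (-(1/2) * ‖x‖ ^ 2) =
            (cA * Real.exp (-(1/2) * ‖x‖ ^ 2)) * ε := by ring
        _ ≤ ((t - τ) ^ (α - 1) / Real.Gamma α * (4 * Real.pi * (t - τ)) ^ (-(n:ℝ) / 2) *
              Real.exp (-‖x - ξ‖ ^ 2 / (4 * (t - τ)))) * f ξ τ := by
            apply mul_le_mul hΦge (le_trans hfq le_rfl) hε.le ?_
            have := Real.rpow_pos_of_pos hu0 (α - 1)
            have := Real.rpow_pos_of_pos (show (0:ℝ) < 4 * Real.pi * (t - τ) by positivity) (-(n:ℝ)/2)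
            positivity
      · rw [Set.indicator_of_notMem hq, mul_zero]
        exact zero_le
    -- Tonelli: the double integral of the indicator of A equals its measure
    have hind_meas : Measurable (fun q : EuclideanSpace ℝ (Fin n) × ℝ =>
        A.indicator (fun _ => (1:ℝ≥0∞)) q) := (measurable_const.indicator hAmeas)
    have hTon : ∫⁻ τ in Iio t, ∫⁻ ξ, A.indicator (fun _ => (1:ℝ≥0∞)) (ξ, τ) = volume A := by
      have h1 : ∀ τ : ℝ, τ ∉ Iio t → (∫⁻ ξ, A.indicator (fun _ => (1:ℝ≥0∞)) (ξ, τ)) = 0 := by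
        intro τ hτ
        have : ∀ ξ, A.indicator (fun _ => (1:ℝ≥0∞)) (ξ, τ) = 0 := by
          intro ξ
          apply Set.indicator_of_notMem
          intro hmem
          obtain ⟨_, ⟨_, hτR⟩, _⟩ := hAsub hmem
          simp only [mem_Iio, not_lt] at hτ
          rw [hT1def] at ht1
          linarith
        simp only [this, lintegral_zero]
      rw [← lintegral_indicator measurableSet_Iio]
      have h2 : (Iio t).indicator (fun τ => ∫⁻ ξ, A.indicator (fun _ => (1:ℝ≥0∞)) (ξ, τ)) =
          fun τ => ∫⁻ ξ, A.indicator (fun _ => (1:ℝ≥0∞)) (ξ, τ) := by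
        funext τ
        by_cases hτ : τ ∈ Iio t
        · rw [Set.indicator_of_mem hτ]
        · rw [Set.indicator_of_notMem hτ, (h1 τ hτ).symm]
      rw [h2]
      rw [← MeasureTheory.lintegral_prod_symm _ hind_meas.aemeasurable]
      rw [← Measure.volume_eq_prod]
      exact lintegral_indicator_one hAmeas
    -- conclude
    have hfin' : cst ≠ ⊤ := ENNReal.ofReal_ne_top
    calc ENNReal.ofReal (ε * cA * a0 * Real.exp (-(1/2) * ‖x‖ ^ 2))
        = cst * ENNReal.ofReal a0 := by
          rw [hcstdef, ← ENNReal.ofReal_mul (by positivity)]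
          ring_nf
    _ = cst * volume A := by rw [hA0eq]
    _ = cst * ∫⁻ τ in Iio t, ∫⁻ ξ, A.indicator (fun _ => (1:ℝ≥0∞)) (ξ, τ) := by rw [hTon]
    _ = ∫⁻ τ in Iio t, cst * ∫⁻ ξ, A.indicator (fun _ => (1:ℝ≥0∞)) (ξ, τ) := by
          rw [lintegral_const_mul' _ _ hfin']
    _ = ∫⁻ τ in Iio t, ∫⁻ ξ, cst * A.indicator (fun _ => (1:ℝ≥0∞)) (ξ, τ) := by
          congr 1
          funext τ
          rw [lintegral_const_mul' _ _ hfin']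
    _ ≤ J n α f x t := by
          unfold J
          exact lintegral_mono fun τ => lintegral_mono fun ξ => hpt ξ τ
  -- Main iteration
  have key : ∀ k : ℕ, ∃ c : ℝ, 0 < c ∧ u0 + v * k ≤ Real.log c ∧
      ∀ᵐ q : EuclideanSpace ℝ (Fin n) × ℝ,
        s k < q.2 → q.2 ≤ T2 → c * Real.exp (-(b k) * ‖q.1‖ ^ 2) ≤ f q.1 q.2 := by
    intro k
    induction k with
    | zero =>
      refine ⟨C0, hC0pos, by
        rw [Nat.cast_zero, mul_zero, add_zero, hu0def]; exact min_le_left _ _, ?_⟩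
      filter_upwards [hineq] with q hq ht1 ht2
      have hs0 : s 0 = T1 := by rw [hsdef]; norm_num
      rw [hs0] at ht1
      have hJ := base_J q.1 q.2 ht1 ht2
      have h2 : (ENNReal.ofReal (ε * cA * a0 * Real.exp (-(1/2) * ‖q.1‖ ^ 2))) ^ lam ≤
          ENNReal.ofReal (f q.1 q.2) := le_trans (ENNReal.rpow_le_rpow hJ hlam0.le) hq
      rw [ENNReal.ofReal_rpow_of_pos (by positivity)] at h2
      have h3 : (ε * cA * a0 * Real.exp (-(1/2) * ‖q.1‖ ^ 2)) ^ lam =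
          C0 * Real.exp (-(b 0) * ‖q.1‖ ^ 2) := by
        rw [hC0def, hbdef]
        simp only [pow_zero, mul_one]
        rw [Real.mul_rpow (by positivity) (Real.exp_pos _).le, ← Real.exp_mul]
        congr 1
        ring
      rw [h3] at h2
      exact (ENNReal.ofReal_le_ofReal_iff (hpos _ _)).mp h2
    | succ k ih =>
      obtain ⟨c, hc0, hclog, hcae⟩ := ih
      have hδ2pos : 0 < δ k / 2 := by have := hδpos k; linarith
      have hδ2le1 : δ k / 2 ≤ 1 := by
        have h1 : ρ ^ k ≤ 1 := pow_le_one₀ hρ0.le hρ1.le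
        have : δ k ≤ (1 - ρ) / 2 := by
          rw [hδdef]; simp only []
          calc (1 - ρ) / 2 * ρ ^ k ≤ (1 - ρ) / 2 * 1 :=
            mul_le_mul_of_nonneg_left h1 (by linarith)
          _ = (1 - ρ) / 2 := mul_one _
        linarith
      set W : Set ℝ := Ioc (s k) (s k + δ k / 2) with hWdef
      set g : EuclideanSpace ℝ (Fin n) → ℝ → ℝ :=
        fun ξ τ => if τ ∈ W then c * Real.exp (-(b k) * ‖ξ‖ ^ 2) else 0 with hgdef
      have hWT2 : s k + δ k / 2 ≤ T2 := by
        have h1 := hs_lt (k + 1)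
        have h2 := hs_succ k
        have h3 := hδpos k
        have h4 : s k + δ k / 2 ≤ s k + δ k := by linarith
        rw [← h2] at h4
        have h5 : s (k + 1) ≤ T1 + 1 / 2 := h1.le
        rw [hT2T1]
        linarith
      have hgle : ∀ᵐ q : EuclideanSpace ℝ (Fin n) × ℝ, g q.1 q.2 ≤ f q.1 q.2 := by
        filter_upwards [hcae] with q hq
        rw [hgdef]
        simp only []
        by_cases hτ : q.2 ∈ W
        · rw [if_pos hτ]
          exact hq hτ.1 (le_trans hτ.2 hWT2)
        · rw [if_neg hτ]; exact hpos _ _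
      -- lower bound for J g
      have hJg : ∀ (x : EuclideanSpace ℝ (Fin n)) (t : ℝ), s (k+1) < t → t ≤ T2 →
          ENNReal.ofReal ((c * (M * VB * (δ k / 2) ^ θ)) *
            Real.exp (-(lam'/lam) * b k * ‖x‖ ^ 2)) ≤ J n α g x t := by
        intro x t ht1 ht2
        have hop : W ⊆ Iio t := by
          intro τ hτ
          have h2 := hs_succ k
          have h3 := hδpos k
          have := hτ.2
          simp only [mem_Iio]
          linarith
        -- inner bound for fixed τ ∈ W
        have hinner : ∀ τ ∈ W,
            ENNReal.ofReal ((c * (M * VB * (δ k / 2) ^ (α + (n:ℝ)))) *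
              Real.exp (-(lam'/lam) * b k * ‖x‖ ^ 2)) ≤
            ∫⁻ ξ, ENNReal.ofReal (Phi n α (x - ξ) (t - τ) * g ξ τ) := by
          intro τ hτ
          set u : ℝ := t - τ with hudef
          have hu0 : 0 < u := by
            have := hop hτ; simp only [mem_Iio] at this
            rw [hudef]; linarith
          have hu_lo : δ k / 2 ≤ u := by
            have h2 := hs_succ k
            have := hτ.2
            rw [hudef]; linarith
          have hu_hi : u ≤ 1 := by
            have h1 := hs_ge k
            have := hτ.1
            rw [hudef, hT2T1] at *
            linarith
          clear_value u
          set ptc : ℝ := c * M * (u ^ (α - 1) * u ^ (-(n:ℝ)/2)) *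
            Real.exp (-(lam'/lam) * b k * ‖x‖ ^ 2) with hptcdef
          have hptc_pos : 0 < ptc := by
            rw [hptcdef]
            have := Real.rpow_pos_of_pos hu0 (α - 1)
            have := Real.rpow_pos_of_pos hu0 (-(n:ℝ)/2)
            positivity
          -- pointwise bound on the ball
          have hpt : ∀ ξ ∈ Metric.ball x (Real.sqrt u),
              ENNReal.ofReal ptc ≤ ENNReal.ofReal (Phi n α (x - ξ) u * g ξ τ) := by
            intro ξ hξ
            apply ENNReal.ofReal_le_ofReal
            have hball2 : ‖x - ξ‖ ^ 2 ≤ u := by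
              rw [Metric.mem_ball] at hξ
              have h1 : ‖x - ξ‖ < Real.sqrt u := by
                rw [← dist_eq_norm, dist_comm]
                exact hξ
              have h2 : ‖x - ξ‖ ^ 2 < Real.sqrt u ^ 2 := by
                apply pow_lt_pow_left₀ h1 (norm_nonneg _) (by norm_num)
              rw [Real.sq_sqrt hu0.le] at h2
              exact h2.le
            have hgτ : g ξ τ = c * Real.exp (-(b k) * ‖ξ‖ ^ 2) := by
              rw [hgdef]; simp only []; rw [if_pos hτ]
            rw [hgτ, Phi, if_pos hu0]
            have hexp : Real.exp (-(1/4) - κ/2) * Real.exp (-(lam'/lam) * b k * ‖x‖ ^ 2) ≤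
                Real.exp (-‖x - ξ‖ ^ 2 / (4 * u)) * Real.exp (-(b k) * ‖ξ‖ ^ 2) := by
              rw [← Real.exp_add, ← Real.exp_add]
              apply Real.exp_le_exp.mpr
              have h1 : ‖x - ξ‖ ^ 2 / (4 * u) ≤ 1/4 := by
                rw [div_le_iff₀ (by positivity)]
                linarith
              have hquad : ‖ξ‖ ^ 2 ≤ (lam'/lam) * ‖x‖ ^ 2 + κ * ‖x - ξ‖ ^ 2 := by
                have hq1 := quad_ineq hlam0 hlam1 ‖x‖ ‖x - ξ‖ (norm_nonneg _) (norm_nonneg _)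
                have hq2 : ‖ξ‖ ≤ ‖x‖ + ‖x - ξ‖ := by
                  calc ‖ξ‖ = ‖x - (x - ξ)‖ := by congr 1; abel
                  _ ≤ ‖x‖ + ‖x - ξ‖ := norm_sub_le _ _
                have hq3 : ‖ξ‖ ^ 2 ≤ (‖x‖ + ‖x - ξ‖) ^ 2 := by
                  apply pow_le_pow_left₀ (norm_nonneg _) hq2
                have he1 : (1 + lam) / (2 * lam) = lam' / lam := by
                  rw [hlam'def]; field_simp
                have he2 : (1 + lam) / (1 - lam) = κ := by rw [hκdef]
                rw [he1, he2] at hq1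
                linarith
              have h2 : b k * ‖ξ‖ ^ 2 ≤ (lam'/lam) * b k * ‖x‖ ^ 2 + κ/2 := by
                have hb1 := hbpos k
                have hb2 := hble k
                have h3 : b k * ‖ξ‖ ^ 2 ≤ b k * ((lam'/lam) * ‖x‖ ^ 2 + κ * ‖x - ξ‖ ^ 2) :=
                  mul_le_mul_of_nonneg_left hquad hb1.le
                have h4 : b k * (κ * ‖x - ξ‖ ^ 2) ≤ κ/2 := by
                  have h5 : ‖x - ξ‖ ^ 2 ≤ 1 := le_trans hball2 hu_hi
                  have h6 : b k * ‖x - ξ‖ ^ 2 ≤ (1/2) * 1 := by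
                    apply mul_le_mul hb2 h5 (sq_nonneg _) (by norm_num)
                  calc b k * (κ * ‖x - ξ‖ ^ 2) = κ * (b k * ‖x - ξ‖ ^ 2) := by ring
                  _ ≤ κ * ((1/2) * 1) := mul_le_mul_of_nonneg_left h6 hκ0.le
                  _ = κ/2 := by ring
                have h7 : b k * ((lam'/lam) * ‖x‖ ^ 2 + κ * ‖x - ξ‖ ^ 2) =
                    (lam'/lam) * b k * ‖x‖ ^ 2 + b k * (κ * ‖x - ξ‖ ^ 2) := by ring
                rw [h7] at h3
                linarith
              rw [show -‖x - ξ‖ ^ 2 / (4 * u) = -(‖x - ξ‖ ^ 2 / (4 * u)) by ring]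
              linarith
            have hfact : (0:ℝ) < c * ((4 * Real.pi) ^ (-(n:ℝ)/2) / Real.Gamma α) *
                (u ^ (α - 1) * u ^ (-(n:ℝ)/2)) := by
              have := Real.rpow_pos_of_pos hu0 (α - 1)
              have := Real.rpow_pos_of_pos hu0 (-(n:ℝ)/2)
              have := Real.rpow_pos_of_pos (show (0:ℝ) < 4 * Real.pi by positivity) (-(n:ℝ)/2)
              positivity
            have hsplit4 : (4 * Real.pi * u) ^ (-(n:ℝ)/2) =
                (4 * Real.pi) ^ (-(n:ℝ)/2) * u ^ (-(n:ℝ)/2) :=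
              Real.mul_rpow (by positivity) hu0.le
            have hMexp : M = (4 * Real.pi) ^ (-(n:ℝ)/2) *
                (Real.exp (-(1/4) - κ/2)) / Real.Gamma α := by rw [hMdef]
            calc ptc = (c * ((4 * Real.pi) ^ (-(n:ℝ)/2) / Real.Gamma α) *
                (u ^ (α - 1) * u ^ (-(n:ℝ)/2))) *
                (Real.exp (-(1/4) - κ/2) * Real.exp (-(lam'/lam) * b k * ‖x‖ ^ 2)) := by
                  rw [hptcdef, hMexp]; ring
            _ ≤ (c * ((4 * Real.pi) ^ (-(n:ℝ)/2) / Real.Gamma α) *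
                (u ^ (α - 1) * u ^ (-(n:ℝ)/2))) *
                (Real.exp (-‖x - ξ‖ ^ 2 / (4 * u)) * Real.exp (-(b k) * ‖ξ‖ ^ 2)) :=
                  mul_le_mul_of_nonneg_left hexp hfact.le
            _ = u ^ (α - 1) / Real.Gamma α * (4 * Real.pi * u) ^ (-(n:ℝ)/2) *
                Real.exp (-‖x - ξ‖ ^ 2 / (4 * u)) * (c * Real.exp (-(b k) * ‖ξ‖ ^ 2)) := by
                  rw [hsplit4]; ring
          -- integrate over the ball
          have hballvol : volume (Metric.ball x (Real.sqrt u)) =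
              ENNReal.ofReal (u ^ ((n:ℝ)/2) * VB) := by
            rw [Measure.addHaar_ball volume x (Real.sqrt_nonneg u), finrank_euclideanSpace_fin,
              hVBeq]
            rw [← ENNReal.ofReal_mul (by positivity)]
            congr 2
            rw [Real.sqrt_eq_rpow, ← Real.rpow_natCast (u ^ ((1:ℝ)/2)) n,
              ← Real.rpow_mul hu0.le]
            congr 1
            ring
          have hcollect : (c * (M * VB * (δ k / 2) ^ (α + (n:ℝ)))) *
              Real.exp (-(lam'/lam) * b k * ‖x‖ ^ 2) ≤ ptc * (u ^ ((n:ℝ)/2) * VB) := by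
            have hupow : u ^ (-(n:ℝ)/2) * u ^ ((n:ℝ)/2) = 1 := by
              rw [← Real.rpow_add hu0, neg_div, neg_add_cancel, Real.rpow_zero]
            have hkey : (δ k / 2) ^ (α + (n:ℝ)) ≤ u ^ (α - 1) := by
              have hcast : (0:ℝ) ≤ n := Nat.cast_nonneg n
              rcases le_or_gt 1 α with hα1 | hα1
              · have hk1 : (δ k / 2) ^ (α + (n:ℝ)) ≤ (δ k / 2) ^ (α - 1) :=
                  Real.rpow_le_rpow_of_exponent_ge hδ2pos hδ2le1 (by linarith)
                have hk2 : (δ k / 2) ^ (α - 1) ≤ u ^ (α - 1) :=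
                  Real.rpow_le_rpow hδ2pos.le hu_lo (by linarith)
                exact le_trans hk1 hk2
              · have hk1 : (δ k / 2) ^ (α + (n:ℝ)) ≤ 1 :=
                  Real.rpow_le_one hδ2pos.le hδ2le1 (by linarith)
                have hk2 : u ^ (0:ℝ) ≤ u ^ (α - 1) :=
                  Real.rpow_le_rpow_of_exponent_ge hu0 hu_hi (by linarith)
                rw [Real.rpow_zero] at hk2
                exact le_trans hk1 hk2
            have hrhs : ptc * (u ^ ((n:ℝ)/2) * VB) =
                (c * M * VB * Real.exp (-(lam'/lam) * b k * ‖x‖ ^ 2)) * u ^ (α - 1) := by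
              rw [hptcdef]
              calc c * M * (u ^ (α - 1) * u ^ (-(n:ℝ)/2)) *
                  Real.exp (-(lam'/lam) * b k * ‖x‖ ^ 2) * (u ^ ((n:ℝ)/2) * VB) =
                  (c * M * VB * Real.exp (-(lam'/lam) * b k * ‖x‖ ^ 2)) *
                    (u ^ (α - 1) * (u ^ (-(n:ℝ)/2) * u ^ ((n:ℝ)/2))) := by ring
              _ = _ := by rw [hupow]; ring
            rw [hrhs]
            have hlhs : (c * (M * VB * (δ k / 2) ^ (α + (n:ℝ)))) *
                Real.exp (-(lam'/lam) * b k * ‖x‖ ^ 2) =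
                (c * M * VB * Real.exp (-(lam'/lam) * b k * ‖x‖ ^ 2)) *
                  (δ k / 2) ^ (α + (n:ℝ)) := by ring
            rw [hlhs]
            apply mul_le_mul_of_nonneg_left hkey
            positivity
          calc ENNReal.ofReal ((c * (M * VB * (δ k / 2) ^ (α + (n:ℝ)))) *
              Real.exp (-(lam'/lam) * b k * ‖x‖ ^ 2))
              ≤ ENNReal.ofReal (ptc * (u ^ ((n:ℝ)/2) * VB)) := ENNReal.ofReal_le_ofReal hcollect
          _ = ENNReal.ofReal ptc * ENNReal.ofReal (u ^ ((n:ℝ)/2) * VB) :=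
              ENNReal.ofReal_mul hptc_pos.le
          _ = ENNReal.ofReal ptc * volume (Metric.ball x (Real.sqrt u)) := by rw [hballvol]
          _ = ∫⁻ ξ in Metric.ball x (Real.sqrt u), ENNReal.ofReal ptc := by
              rw [setLIntegral_const]
          _ ≤ ∫⁻ ξ in Metric.ball x (Real.sqrt u),
                ENNReal.ofReal (Phi n α (x - ξ) u * g ξ τ) :=
              setLIntegral_mono' measurableSet_ball hpt
          _ ≤ ∫⁻ ξ, ENNReal.ofReal (Phi n α (x - ξ) u * g ξ τ) :=
              setLIntegral_le_lintegral _ _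
        -- integrate over W
        have hWvol : volume W = ENNReal.ofReal (δ k / 2) := by
          rw [hWdef, Real.volume_Ioc]
          congr 1
          ring
        have hsplitθ : (δ k / 2) ^ θ = (δ k / 2) ^ (α + (n:ℝ)) * (δ k / 2) := by
          rw [hθdef, Real.rpow_add_one hδ2pos.ne']
        calc ENNReal.ofReal ((c * (M * VB * (δ k / 2) ^ θ)) *
            Real.exp (-(lam'/lam) * b k * ‖x‖ ^ 2))
            = ENNReal.ofReal ((c * (M * VB * (δ k / 2) ^ (α + (n:ℝ)))) *
              Real.exp (-(lam'/lam) * b k * ‖x‖ ^ 2)) * ENNReal.ofReal (δ k / 2) := by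
              rw [← ENNReal.ofReal_mul ?hnn]
              · congr 1
                rw [hsplitθ]
                ring
              case hnn =>
                have h1 : (0:ℝ) < (δ k / 2) ^ (α + (n:ℝ)) := Real.rpow_pos_of_pos hδ2pos _
                positivity
        _ = ENNReal.ofReal ((c * (M * VB * (δ k / 2) ^ (α + (n:ℝ)))) *
              Real.exp (-(lam'/lam) * b k * ‖x‖ ^ 2)) * volume W := by rw [hWvol]
        _ = ∫⁻ τ in W, ENNReal.ofReal ((c * (M * VB * (δ k / 2) ^ (α + (n:ℝ)))) *
              Real.exp (-(lam'/lam) * b k * ‖x‖ ^ 2)) := by rw [setLIntegral_const]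
        _ ≤ ∫⁻ τ in W, ∫⁻ ξ, ENNReal.ofReal (Phi n α (x - ξ) (t - τ) * g ξ τ) :=
            setLIntegral_mono' measurableSet_Ioc hinner
        _ ≤ ∫⁻ τ in Iio t, ∫⁻ ξ, ENNReal.ofReal (Phi n α (x - ξ) (t - τ) * g ξ τ) :=
            lintegral_mono_set hop
        _ = J n α g x t := rfl
      -- combine with the integral inequality
      set c' : ℝ := (c * (M * VB * (δ k / 2) ^ θ)) ^ lam with hc'def
      have hbase_pos : (0:ℝ) < c * (M * VB * (δ k / 2) ^ θ) := by
        have h1 : (0:ℝ) < (δ k / 2) ^ θ := Real.rpow_pos_of_pos hδ2pos _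
        positivity
      have hc'0 : 0 < c' := by rw [hc'def]; exact Real.rpow_pos_of_pos hbase_pos _
      refine ⟨c', hc'0, ?_, ?_⟩
      · -- logarithmic lower bound
        have hδk2 : δ k / 2 = (1 - ρ)/4 * ρ ^ k := by rw [hδdef]; ring
        have hD2split : M * VB * (δ k / 2) ^ θ = D2 * ((ρ ^ k) ^ θ) := by
          rw [hD2def, hδk2, Real.mul_rpow (by linarith : (0:ℝ) ≤ (1-ρ)/4) (pow_pos hρ0 k).le]
          ring
        have hlogc' : Real.log c' = lam * (Real.log c + Real.log D2 + θ * (k * Real.log ρ)) := by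
          rw [hc'def, Real.log_rpow hbase_pos, hD2split, Real.log_mul hc0.ne'
            (by positivity : (0:ℝ) < D2 * (ρ ^ k) ^ θ).ne',
            Real.log_mul hD2pos.ne' (Real.rpow_pos_of_pos (pow_pos hρ0 k) θ).ne',
            Real.log_rpow (pow_pos hρ0 k), Real.log_pow]
          ring
        have hv1 : lam * θ * Real.log ρ = (1 - lam) * v := by
          have hne : (1:ℝ) - lam ≠ 0 := by linarith
          rw [hvdef]
          field_simp
        have hu0le : u0 * (1 - lam) ≤ lam * Real.log D2 - v := by
          have h1 : u0 ≤ (lam * Real.log D2 - v) / (1 - lam) := by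
            rw [hu0def]; exact min_le_right _ _
          exact (le_div_iff₀ (by linarith : (0:ℝ) < 1 - lam)).mp h1
        have hc1 : lam * (u0 + v * k) ≤ lam * Real.log c :=
          mul_le_mul_of_nonneg_left hclog hlam0.le
        rw [hlogc']
        have hv2 : lam * (θ * (k * Real.log ρ)) = (1 - lam) * v * k := by
          have : lam * (θ * (k * Real.log ρ)) = (lam * θ * Real.log ρ) * k := by ring
          rw [this, hv1]
        push_cast [Nat.cast_succ]
        linarith [hc1, hu0le, hv2]
      · -- a.e. pointwise bound
        filter_upwards [hineq] with q hq ht1 ht2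
        have hJ1 := hJg q.1 q.2 ht1 ht2
        have hJ2 := J_mono hα f g hgle q.1 q.2
        have h2 : (ENNReal.ofReal ((c * (M * VB * (δ k / 2) ^ θ)) *
            Real.exp (-(lam'/lam) * b k * ‖q.1‖ ^ 2))) ^ lam ≤
            ENNReal.ofReal (f q.1 q.2) :=
          le_trans (ENNReal.rpow_le_rpow (le_trans hJ1 hJ2) hlam0.le) hq
        rw [ENNReal.ofReal_rpow_of_pos (by
          have h1 : (0:ℝ) < (δ k / 2) ^ θ := Real.rpow_pos_of_pos hδ2pos _
          positivity)] at h2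
        have h3 : ((c * (M * VB * (δ k / 2) ^ θ)) *
            Real.exp (-(lam'/lam) * b k * ‖q.1‖ ^ 2)) ^ lam =
            c' * Real.exp (-(b (k+1)) * ‖q.1‖ ^ 2) := by
          rw [hc'def, Real.mul_rpow hbase_pos.le (Real.exp_pos _).le, ← Real.exp_mul]
          congr 2
          rw [hb_succ k]
          field_simp
        rw [h3] at h2
        exact (ENNReal.ofReal_le_ofReal_iff (hpos _ _)).mp h2
  -- Final contradiction via the L^p bound
  have hpnn : (0:ℝ) ≤ p := by linarith
  set Ip : ℝ≥0∞ := ∫⁻ q in {q : EuclideanSpace ℝ (Fin n) × ℝ | q.2 < T2 + 1},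
      (‖Function.uncurry f q‖₊ : ℝ≥0∞) ^ p ∂volume with hIpdef
  have hIfin : Ip < ⊤ := by
    have h1 := hfLp (T2 + 1)
    have hpne0 : ENNReal.ofReal p ≠ 0 := by
      simp only [ne_eq, ENNReal.ofReal_eq_zero, not_le]; linarith
    rw [eLpNorm_eq_lintegral_rpow_enorm_toReal hpne0 ENNReal.ofReal_ne_top,
      ENNReal.toReal_ofReal hpnn] at h1
    have h2 : (Ip) ^ (1/p) < ⊤ := h1
    rw [ENNReal.rpow_lt_top_iff_of_pos (by positivity : (0:ℝ) < 1/p)] at h2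
    exact h2
  have grow : ∀ k : ℕ, ∃ c : ℝ, 0 < c ∧ u0 + v * k ≤ Real.log c ∧
      ENNReal.ofReal ((c * Real.exp (-1)) ^ p * ((b k ^ (-(1:ℝ)/2)) ^ n * VB) * (1/2)) ≤ Ip := by
    intro k
    obtain ⟨c, hc0, hclog, hcae⟩ := key k
    set rk : ℝ := b k ^ (-(1:ℝ)/2) with hrkdef
    have hrk0 : 0 < rk := Real.rpow_pos_of_pos (hbpos k) _
    set Q : Set (EuclideanSpace ℝ (Fin n) × ℝ) :=
      (Metric.ball (0:EuclideanSpace ℝ (Fin n)) rk) ×ˢ Ioc (T1 + 1/2) T2 with hQdef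
    have hQmeas : MeasurableSet Q := Metric.isOpen_ball.measurableSet.prod measurableSet_Ioc
    have hQsub : Q ⊆ {q : EuclideanSpace ℝ (Fin n) × ℝ | q.2 < T2 + 1} := by
      rintro q ⟨_, _, h2⟩
      simp only [mem_setOf_eq]
      linarith
    have hae : ∀ᵐ q ∂(volume.restrict Q),
        ENNReal.ofReal ((c * Real.exp (-1)) ^ p) ≤ (‖Function.uncurry f q‖₊ : ℝ≥0∞) ^ p := by
      filter_upwards [ae_restrict_of_ae hcae, ae_restrict_mem hQmeas] with q h1 h2
      obtain ⟨hq1, hq2⟩ := h2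
      have hfq := h1 (lt_trans (hs_lt k) hq2.1) hq2.2
      have hx2 : b k * ‖q.1‖ ^ 2 ≤ 1 := by
        have h3 : ‖q.1‖ < rk := by
          rw [Metric.mem_ball, dist_zero_right] at hq1
          exact hq1
        have h4 : ‖q.1‖ ^ 2 ≤ rk ^ 2 := by
          apply pow_le_pow_left₀ (norm_nonneg _) h3.le
        have h5 : rk ^ 2 = (b k)⁻¹ := by
          rw [hrkdef, ← Real.rpow_natCast (b k ^ (-(1:ℝ)/2)) 2, ← Real.rpow_mul (hbpos k).le]
          norm_num
          exact Real.rpow_neg_one (b k)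
        have h8 : b k * ‖q.1‖ ^ 2 ≤ b k * (b k)⁻¹ := by
          rw [← h5]
          exact mul_le_mul_of_nonneg_left h4 (hbpos k).le
        have h9 : b k * (b k)⁻¹ = 1 := mul_inv_cancel₀ (hbpos k).ne'
        rw [h9] at h8
        exact h8
      have h6 : c * Real.exp (-1) ≤ f q.1 q.2 := by
        have h6a : c * Real.exp (-1) ≤ c * Real.exp (-(b k) * ‖q.1‖ ^ 2) := by
          apply mul_le_mul_of_nonneg_left ?_ hc0.le
          apply Real.exp_le_exp.mpr
          linarith [hx2]
        exact le_trans h6a hfq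
      have h7 : (‖Function.uncurry f q‖₊ : ℝ≥0∞) = ENNReal.ofReal (f q.1 q.2) :=
        Real.enorm_eq_ofReal (hpos _ _)
      rw [h7]
      calc ENNReal.ofReal ((c * Real.exp (-1)) ^ p)
          = (ENNReal.ofReal (c * Real.exp (-1))) ^ p :=
            (ENNReal.ofReal_rpow_of_pos (by positivity)).symm
      _ ≤ (ENNReal.ofReal (f q.1 q.2)) ^ p :=
            ENNReal.rpow_le_rpow (ENNReal.ofReal_le_ofReal h6) hpnn
    have hQvol : volume Q = ENNReal.ofReal (rk ^ n * VB) * ENNReal.ofReal (1/2) := by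
      rw [hQdef, Measure.volume_eq_prod, Measure.prod_prod, Real.volume_Ioc,
        Measure.addHaar_ball volume (0:EuclideanSpace ℝ (Fin n)) hrk0.le,
        finrank_euclideanSpace_fin, hVBeq, ← ENNReal.ofReal_mul (by positivity)]
      congr 2
      rw [hT2T1]; ring
    refine ⟨c, hc0, hclog, ?_⟩
    calc ENNReal.ofReal ((c * Real.exp (-1)) ^ p * (rk ^ n * VB) * (1/2))
        = ENNReal.ofReal ((c * Real.exp (-1)) ^ p) *
          (ENNReal.ofReal (rk ^ n * VB) * ENNReal.ofReal (1/2)) := by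
          rw [← ENNReal.ofReal_mul (by positivity), ← ENNReal.ofReal_mul (by positivity)]
          congr 1
          ring
    _ = ENNReal.ofReal ((c * Real.exp (-1)) ^ p) * volume Q := by rw [hQvol]
    _ = ∫⁻ _ in Q, ENNReal.ofReal ((c * Real.exp (-1)) ^ p) := (setLIntegral_const _ _).symm
    _ ≤ ∫⁻ q in Q, (‖Function.uncurry f q‖₊ : ℝ≥0∞) ^ p := lintegral_mono_ae hae
    _ ≤ Ip := lintegral_mono_set hQsub
  -- growth rate
  have hlamne : lam ≠ 0 := hlam0.ne'
  have h1mlamne : (1:ℝ) - lam ≠ 0 := by linarith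
  have hpne : p ≠ 0 := by linarith
  have hθne : θ ≠ 0 := hθ0.ne'
  set G : ℝ := p * v + (n:ℝ)/2 * (-Real.log lam') with hGdef
  have hGeq : G = (n:ℝ) * (-Real.log lam') / 4 := by
    rw [hGdef, hvdef, hlogρ, hε2def]
    field_simp
    ring
  have hG : 0 < G := by
    rw [hGeq]
    have : 0 < -Real.log lam' := by linarith
    positivity
  set K0 : ℝ := p * (u0 - 1) - (n:ℝ)/2 * Real.log (lam/2) + Real.log VB + Real.log (1/2)
    with hK0def
  have hlow : ∀ k : ℕ, Real.exp (K0 + G * k) ≤ Ip.toReal := by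
    intro k
    obtain ⟨c, hc0, hclog, hle⟩ := grow k
    have hIle := (ENNReal.ofReal_le_iff_le_toReal hIfin.ne).mp hle
    refine le_trans ?_ hIle
    have hbk := hbpos k
    have hrpos : (0:ℝ) < (b k ^ (-(1:ℝ)/2)) ^ n := by positivity
    have hval_pos : (0:ℝ) < (c * Real.exp (-1)) ^ p * ((b k ^ (-(1:ℝ)/2)) ^ n * VB) * (1/2) := by
      have : (0:ℝ) < (c * Real.exp (-1)) ^ p := Real.rpow_pos_of_pos (by positivity) _
      positivity
    rw [← Real.exp_log hval_pos]
    apply Real.exp_le_exp.mpr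
    have hlog1 : Real.log ((c * Real.exp (-1)) ^ p) = p * (Real.log c - 1) := by
      rw [Real.log_rpow (by positivity), Real.log_mul hc0.ne' (Real.exp_pos _).ne',
        Real.log_exp]
      ring
    have hlogbk : Real.log (b k) = Real.log (lam/2) + k * Real.log lam' := by
      rw [hbdef]
      simp only []
      rw [Real.log_mul (by positivity : (0:ℝ) < lam/2).ne' (pow_pos hlam'0 k).ne',
        Real.log_pow]
    have hlog2 : Real.log ((b k ^ (-(1:ℝ)/2)) ^ n) = (n:ℝ) * (-(1:ℝ)/2 * Real.log (b k)) := by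
      rw [Real.log_pow, Real.log_rpow hbk]
    have hsplit : Real.log ((c * Real.exp (-1)) ^ p * ((b k ^ (-(1:ℝ)/2)) ^ n * VB) * (1/2)) =
        Real.log ((c * Real.exp (-1)) ^ p) + (Real.log ((b k ^ (-(1:ℝ)/2)) ^ n) + Real.log VB)
          + Real.log (1/2) := by
      rw [Real.log_mul (by positivity : (0:ℝ) < (c * Real.exp (-1)) ^ p *
          ((b k ^ (-(1:ℝ)/2)) ^ n * VB)).ne' (by norm_num : (1:ℝ)/2 ≠ 0),
        Real.log_mul (Real.rpow_pos_of_pos (by positivity) p).ne'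
          (by positivity : (0:ℝ) < (b k ^ (-(1:ℝ)/2)) ^ n * VB).ne',
        Real.log_mul hrpos.ne' hVBpos.ne']
    rw [hsplit, hlog1, hlog2, hlogbk]
    have hcp : p * (u0 + v * k) ≤ p * Real.log c := mul_le_mul_of_nonneg_left hclog hpnn
    rw [hK0def, hGdef]
    linarith [hcp]
  have htend : Filter.Tendsto (fun k : ℕ => Real.exp (K0 + G * k)) Filter.atTop Filter.atTop := by
    apply Real.tendsto_exp_atTop.comp
    apply Filter.tendsto_atTop_add_const_left
    exact Filter.Tendsto.const_mul_atTop hG tendsto_natCast_atTop_atTop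
  obtain ⟨k, hk⟩ := (htend.eventually_gt_atTop Ip.toReal).exists
  exact absurd (hlow k) (not_le.mpr hk)
end

section
/- Let n ≥ 1, α > 0 and T > 0. Then there exists a constant a > 0, depending only on α, such that the function f(x,t) := e^{a(t+T)}·Φ₁(x, t+T)·χ_{[0,∞)}(t) satisfies: f ∈ X^p for every p ∈ [1,∞), f ≥ J_α f everywhere on ℝ^n×ℝ, f = 0 on ℝ^n×(−∞,0), and f is not zero a.e. -/
open MeasureTheory Real Set
open scoped ENNReal RealInnerProductSpace

noncomputable def HK (n : ℕ) (t : ℝ) (x : EuclideanSpace ℝ (Fin n)) : ℝ :=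
  (4 * Real.pi * t) ^ (-(n : ℝ) / 2) * Real.exp (-‖x‖ ^ 2 / (4 * t))

lemma HK_pos (n : ℕ) {t : ℝ} (ht : 0 < t) (x : EuclideanSpace ℝ (Fin n)) : 0 < HK n t x := by
  unfold HK
  have : (0:ℝ) < 4 * Real.pi * t := by positivity
  positivity

lemma Phi_one (n : ℕ) (x : EuclideanSpace ℝ (Fin n)) {t : ℝ} (ht : 0 < t) :
    Phi n 1 x t = HK n t x := by
  simp [Phi, HK, ht, Real.Gamma_one, Real.rpow_zero]

lemma Phi_eq (n : ℕ) (α : ℝ) (x : EuclideanSpace ℝ (Fin n)) {t : ℝ} (ht : 0 < t) :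
    Phi n α x t = (t ^ (α - 1) / Real.Gamma α) * HK n t x := by
  simp [Phi, HK, ht, mul_assoc]

lemma gauss_lintegral (n : ℕ) {b : ℝ} (hb : 0 < b) :
    ∫⁻ v : EuclideanSpace ℝ (Fin n), ENNReal.ofReal (Real.exp (-b * ‖v‖ ^ 2))
      = ENNReal.ofReal ((Real.pi / b) ^ ((n : ℝ) / 2)) := by
  have hint : Integrable (fun v : EuclideanSpace ℝ (Fin n) => Real.exp (-b * ‖v‖ ^ 2)) := by
    have := (GaussianFourier.integrable_cexp_neg_mul_sq_norm_add (V := EuclideanSpace ℝ (Fin n))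
      (b := (b : ℂ)) (by simpa using hb) 0 0).norm
    refine this.congr (Filter.Eventually.of_forall fun v => ?_)
    simp [Complex.norm_exp]
    norm_cast
    left; rfl
  rw [← ofReal_integral_eq_lintegral_ofReal hint
    (Filter.Eventually.of_forall fun v => (Real.exp_pos _).le)]
  congr 1
  rw [GaussianFourier.integral_rexp_neg_mul_sq_norm hb]
  simp

lemma scalar_sq (s u X Xi P : ℝ) (hs : 0 < s) (hu : 0 < u) :
    -(X - 2 * P + Xi) / (4 * s) + -Xi / (4 * u)
      = -((s + u) / (4 * s * u)) * (Xi - 2 * (u / (s + u)) * P + (u / (s + u)) ^ 2 * X)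
        + -X / (4 * (s + u)) := by
  have hsu : (0:ℝ) < s + u := by linarith
  field_simp
  ring

lemma scalar_const (n : ℕ) {s u : ℝ} (hs : 0 < s) (hu : 0 < u) :
    (4 * Real.pi * s) ^ (-(n : ℝ) / 2) * (4 * Real.pi * u) ^ (-(n : ℝ) / 2) *
      (Real.pi / ((s + u) / (4 * s * u))) ^ ((n : ℝ) / 2)
    = (4 * Real.pi * (s + u)) ^ (-(n : ℝ) / 2) := by
  have hsu : (0:ℝ) < s + u := by linarith
  have hb : (0:ℝ) < (s + u) / (4 * s * u) := by positivity
  have hπb : (Real.pi / ((s + u) / (4 * s * u))) ^ ((n : ℝ) / 2)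
      = ((s + u) / (4 * s * u) / Real.pi) ^ (-(n : ℝ) / 2) := by
    rw [show -(n : ℝ) / 2 = -((n : ℝ) / 2) by ring, Real.rpow_neg (by positivity),
      ← Real.inv_rpow (by positivity), inv_div]
  rw [hπb, ← Real.mul_rpow (by positivity) (by positivity),
    ← Real.mul_rpow (by positivity) (by positivity)]
  congr 1
  have hπ : Real.pi ≠ 0 := Real.pi_ne_zero
  field_simp

set_option maxHeartbeats 1000000 in
lemma heat_conv (n : ℕ) {s u : ℝ} (hs : 0 < s) (hu : 0 < u) (x : EuclideanSpace ℝ (Fin n)) :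
    ∫⁻ ξ : EuclideanSpace ℝ (Fin n), ENNReal.ofReal (HK n s (x - ξ) * HK n u ξ)
      = ENNReal.ofReal (HK n (s + u) x) := by
  have hsu : (0:ℝ) < s + u := by linarith
  have hb : (0:ℝ) < (s + u) / (4 * s * u) := by positivity
  have hD : (0:ℝ) ≤ (4 * Real.pi * s) ^ (-(n : ℝ) / 2) * (4 * Real.pi * u) ^ (-(n : ℝ) / 2) *
      Real.exp (-‖x‖ ^ 2 / (4 * (s + u))) := by
    have h1 : (0:ℝ) < 4 * Real.pi * s := by positivity
    have h2 : (0:ℝ) < 4 * Real.pi * u := by positivity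
    positivity
  have key : ∀ ξ : EuclideanSpace ℝ (Fin n),
      HK n s (x - ξ) * HK n u ξ
        = ((4 * Real.pi * s) ^ (-(n : ℝ) / 2) * (4 * Real.pi * u) ^ (-(n : ℝ) / 2) *
            Real.exp (-‖x‖ ^ 2 / (4 * (s + u)))) *
          Real.exp (-((s + u) / (4 * s * u)) * ‖ξ - (u / (s + u)) • x‖ ^ 2) := by
    intro ξ
    have h1 : ‖x - ξ‖ ^ 2 = ‖x‖ ^ 2 - 2 * ⟪x, ξ⟫ + ‖ξ‖ ^ 2 := norm_sub_sq_real x ξ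
    have h2 : ‖ξ - (u / (s + u)) • x‖ ^ 2 = ‖ξ‖ ^ 2 - 2 * (u / (s + u)) * ⟪x, ξ⟫
        + (u / (s + u)) ^ 2 * ‖x‖ ^ 2 := by
      have hic : ⟪ξ, (u / (s + u)) • x⟫ = (u / (s + u)) * ⟪x, ξ⟫ := by
        rw [real_inner_smul_right, real_inner_comm]
      have hc2 : ‖(u / (s + u)) • x‖ ^ 2 = (u / (s + u)) ^ 2 * ‖x‖ ^ 2 := by
        rw [norm_smul, mul_pow, Real.norm_eq_abs, sq_abs]
      rw [norm_sub_sq_real, hic, hc2]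
      ring
    have hexp : -‖x - ξ‖ ^ 2 / (4 * s) + -‖ξ‖ ^ 2 / (4 * u)
        = -((s + u) / (4 * s * u)) * ‖ξ - (u / (s + u)) • x‖ ^ 2
          + -‖x‖ ^ 2 / (4 * (s + u)) := by
      rw [h1, h2]
      exact scalar_sq s u (‖x‖ ^ 2) (‖ξ‖ ^ 2) ⟪x, ξ⟫ hs hu
    unfold HK
    rw [show (4 * Real.pi * s) ^ (-(n : ℝ) / 2) * Real.exp (-‖x - ξ‖ ^ 2 / (4 * s)) *
        ((4 * Real.pi * u) ^ (-(n : ℝ) / 2) * Real.exp (-‖ξ‖ ^ 2 / (4 * u)))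
        = (4 * Real.pi * s) ^ (-(n : ℝ) / 2) * (4 * Real.pi * u) ^ (-(n : ℝ) / 2) *
          (Real.exp (-‖x - ξ‖ ^ 2 / (4 * s)) * Real.exp (-‖ξ‖ ^ 2 / (4 * u))) by ring]
    rw [← Real.exp_add, hexp, Real.exp_add]
    ring
  have hmeas : Measurable fun ξ : EuclideanSpace ℝ (Fin n) =>
      ENNReal.ofReal (Real.exp (-((s + u) / (4 * s * u)) * ‖ξ‖ ^ 2)) :=
    ENNReal.measurable_ofReal.comp (((measurable_norm.pow_const 2).const_mul _).exp)
  calc ∫⁻ ξ, ENNReal.ofReal (HK n s (x - ξ) * HK n u ξ)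
      = ∫⁻ ξ, ENNReal.ofReal ((4 * Real.pi * s) ^ (-(n : ℝ) / 2) *
          (4 * Real.pi * u) ^ (-(n : ℝ) / 2) * Real.exp (-‖x‖ ^ 2 / (4 * (s + u)))) *
          ENNReal.ofReal (Real.exp (-((s + u) / (4 * s * u)) *
            ‖ξ - (u / (s + u)) • x‖ ^ 2)) := by
        refine lintegral_congr fun ξ => ?_
        rw [key ξ, ENNReal.ofReal_mul hD]
    _ = ENNReal.ofReal ((4 * Real.pi * s) ^ (-(n : ℝ) / 2) *
          (4 * Real.pi * u) ^ (-(n : ℝ) / 2) * Real.exp (-‖x‖ ^ 2 / (4 * (s + u)))) *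
        ∫⁻ ξ, ENNReal.ofReal (Real.exp (-((s + u) / (4 * s * u)) *
          ‖ξ - (u / (s + u)) • x‖ ^ 2)) :=
        lintegral_const_mul' _ _ ENNReal.ofReal_ne_top
    _ = ENNReal.ofReal ((4 * Real.pi * s) ^ (-(n : ℝ) / 2) *
          (4 * Real.pi * u) ^ (-(n : ℝ) / 2) * Real.exp (-‖x‖ ^ 2 / (4 * (s + u)))) *
        ENNReal.ofReal ((Real.pi / ((s + u) / (4 * s * u))) ^ ((n : ℝ) / 2)) := by
        congr 1
        rw [(measurePreserving_sub_right volume ((u / (s + u)) • x)).lintegral_comp hmeas]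
        exact gauss_lintegral n hb
    _ = ENNReal.ofReal (HK n (s + u) x) := by
        rw [← ENNReal.ofReal_mul hD]
        congr 1
        unfold HK
        rw [show (4 * Real.pi * s) ^ (-(n : ℝ) / 2) * (4 * Real.pi * u) ^ (-(n : ℝ) / 2) *
            Real.exp (-‖x‖ ^ 2 / (4 * (s + u))) *
            (Real.pi / ((s + u) / (4 * s * u))) ^ ((n : ℝ) / 2)
            = (4 * Real.pi * s) ^ (-(n : ℝ) / 2) * (4 * Real.pi * u) ^ (-(n : ℝ) / 2) *
              (Real.pi / ((s + u) / (4 * s * u))) ^ ((n : ℝ) / 2) *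
              Real.exp (-‖x‖ ^ 2 / (4 * (s + u))) by ring]
        rw [scalar_const n hs hu]

lemma gamma_tail {α t : ℝ} (hα : 0 < α) (ht : 0 < t) :
    ∫⁻ τ in Set.Ico 0 t, ENNReal.ofReal ((t - τ) ^ (α - 1) * Real.exp (-(t - τ)))
      ≤ ENNReal.ofReal (Real.Gamma α) := by
  have hemb : MeasurableEmbedding (fun τ : ℝ => t - τ) :=
    (MeasurableEquiv.subLeft t).measurableEmbedding
  have hmp : MeasurePreserving (fun τ : ℝ => t - τ) volume volume :=
    Measure.measurePreserving_sub_left volume t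
  have himg : (fun τ : ℝ => t - τ) '' Set.Ico 0 t = Set.Ioc 0 t := by
    rw [image_const_sub_Ico]
    simp
  have h1 : ∫⁻ τ in Set.Ico 0 t, ENNReal.ofReal ((t - τ) ^ (α - 1) * Real.exp (-(t - τ)))
      = ∫⁻ y in Set.Ioc 0 t, ENNReal.ofReal (y ^ (α - 1) * Real.exp (-y)) := by
    rw [← himg]
    exact hmp.setLIntegral_comp_emb hemb
      (fun y => ENNReal.ofReal (y ^ (α - 1) * Real.exp (-y))) _
  rw [h1]
  have h2 : ∫⁻ y in Set.Ioc 0 t, ENNReal.ofReal (y ^ (α - 1) * Real.exp (-y))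
      ≤ ∫⁻ y in Set.Ioi 0, ENNReal.ofReal (y ^ (α - 1) * Real.exp (-y)) :=
    lintegral_mono_set Set.Ioc_subset_Ioi_self
  refine h2.trans (le_of_eq ?_)
  have hint := Real.GammaIntegral_convergent hα
  rw [lintegral_congr fun y => by rw [mul_comm],
    ← ofReal_integral_eq_lintegral_ofReal hint ((ae_restrict_iff' measurableSet_Ioi).2
      (Filter.Eventually.of_forall fun y hy => mul_nonneg (Real.exp_pos _).le
        (Real.rpow_nonneg (le_of_lt hy) _))), Real.Gamma_eq_integral hα]

noncomputable def Ff (n : ℕ) (T : ℝ) (x : EuclideanSpace ℝ (Fin n)) (t : ℝ) : ℝ :=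
  if 0 ≤ t then Real.exp (1 * (t + T)) * Phi n 1 x (t + T) else 0

lemma J_le (n : ℕ) {α T : ℝ} (hα : 0 < α) (hT : 0 < T)
    (x : EuclideanSpace ℝ (Fin n)) (t : ℝ) :
    J n α (Ff n T) x t ≤ ENNReal.ofReal (Ff n T x t) := by
  by_cases ht : 0 < t
  · -- main case
    have hΓ : 0 < Real.Gamma α := Real.Gamma_pos_of_pos hα
    have hsplit : Set.Iio t = Set.Iio 0 ∪ Set.Ico 0 t := (Set.Iio_union_Ico_eq_Iio ht.le).symm
    have hdisj : Disjoint (Set.Iio (0:ℝ)) (Set.Ico 0 t) :=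
      Set.disjoint_left.2 fun τ h1 h2 => absurd h2.1 (not_le.2 h1)
    unfold J
    rw [hsplit, lintegral_union measurableSet_Ico hdisj]
    have hzero : ∫⁻ τ in Set.Iio (0:ℝ), ∫⁻ ξ, ENNReal.ofReal (Phi n α (x - ξ) (t - τ) * Ff n T ξ τ) = 0 := by
      rw [setLIntegral_congr_fun measurableSet_Iio (
        fun τ hτ => ?_), lintegral_zero]
      have : ∀ ξ : EuclideanSpace ℝ (Fin n), Phi n α (x - ξ) (t - τ) * Ff n T ξ τ = 0 := by
        intro ξ
        unfold Ff
        rw [if_neg (not_le.2 hτ), mul_zero]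
      simp [this]
    rw [hzero, zero_add]
    have hinner : ∀ τ ∈ Set.Ico (0:ℝ) t,
        (∫⁻ ξ, ENNReal.ofReal (Phi n α (x - ξ) (t - τ) * Ff n T ξ τ))
          = ENNReal.ofReal ((t - τ) ^ (α - 1) / Real.Gamma α * Real.exp (1 * (τ + T))) *
            ENNReal.ofReal (HK n (t + T) x) := by
      intro τ hτ
      have httτ : 0 < t - τ := sub_pos.2 hτ.2
      have hτT : 0 < τ + T := by linarith [hτ.1]
      have hC : 0 ≤ (t - τ) ^ (α - 1) / Real.Gamma α * Real.exp (1 * (τ + T)) :=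
        mul_nonneg (div_nonneg (Real.rpow_nonneg httτ.le _) hΓ.le) (Real.exp_pos _).le
      have intg : ∀ ξ : EuclideanSpace ℝ (Fin n), Phi n α (x - ξ) (t - τ) * Ff n T ξ τ
          = ((t - τ) ^ (α - 1) / Real.Gamma α * Real.exp (1 * (τ + T))) *
            (HK n (t - τ) (x - ξ) * HK n (τ + T) ξ) := by
        intro ξ
        unfold Ff
        rw [if_pos hτ.1, Phi_eq n α _ httτ, Phi_one n ξ hτT]
        ring
      rw [lintegral_congr fun ξ => by rw [intg ξ, ENNReal.ofReal_mul hC],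
        lintegral_const_mul' _ _ ENNReal.ofReal_ne_top, heat_conv n httτ hτT x,
        show t - τ + (τ + T) = t + T by ring]
    rw [setLIntegral_congr_fun measurableSet_Ico hinner,
      lintegral_mul_const' _ _ ENNReal.ofReal_ne_top]
    have hCsplit : ∀ τ : ℝ, ENNReal.ofReal ((t - τ) ^ (α - 1) / Real.Gamma α *
        Real.exp (1 * (τ + T)))
        = ENNReal.ofReal (Real.exp (1 * (t + T)) / Real.Gamma α) *
          ENNReal.ofReal ((t - τ) ^ (α - 1) * Real.exp (-(t - τ))) := by
      intro τ
      rw [← ENNReal.ofReal_mul (by positivity)]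
      congr 1
      have : Real.exp (1 * (τ + T)) = Real.exp (1 * (t + T)) * Real.exp (-(t - τ)) := by
        rw [← Real.exp_add]; congr 1; ring
      rw [this]; ring
    have hbound : ∫⁻ τ in Set.Ico (0:ℝ) t, ENNReal.ofReal ((t - τ) ^ (α - 1) / Real.Gamma α *
        Real.exp (1 * (τ + T))) ≤ ENNReal.ofReal (Real.exp (1 * (t + T))) := by
      rw [lintegral_congr fun τ => hCsplit τ, lintegral_const_mul' _ _ ENNReal.ofReal_ne_top]
      calc ENNReal.ofReal (Real.exp (1 * (t + T)) / Real.Gamma α) *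
            ∫⁻ τ in Set.Ico (0:ℝ) t, ENNReal.ofReal ((t - τ) ^ (α - 1) * Real.exp (-(t - τ)))
          ≤ ENNReal.ofReal (Real.exp (1 * (t + T)) / Real.Gamma α) *
            ENNReal.ofReal (Real.Gamma α) := mul_le_mul_right (gamma_tail hα ht) _
        _ = ENNReal.ofReal (Real.exp (1 * (t + T))) := by
            rw [← ENNReal.ofReal_mul (by positivity), div_mul_cancel₀ _ hΓ.ne']
    calc (∫⁻ τ in Set.Ico (0:ℝ) t, ENNReal.ofReal ((t - τ) ^ (α - 1) / Real.Gamma α *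
          Real.exp (1 * (τ + T)))) * ENNReal.ofReal (HK n (t + T) x)
        ≤ ENNReal.ofReal (Real.exp (1 * (t + T))) * ENNReal.ofReal (HK n (t + T) x) :=
          mul_le_mul_left hbound _
      _ = ENNReal.ofReal (Ff n T x t) := by
          rw [← ENNReal.ofReal_mul (Real.exp_pos _).le]
          unfold Ff
          rw [if_pos ht.le, Phi_one n x (by linarith : (0:ℝ) < t + T)]
  · -- t ≤ 0
    have : J n α (Ff n T) x t = 0 := by
      unfold J
      rw [setLIntegral_congr_fun measurableSet_Iio (
        fun τ hτ => ?_), lintegral_zero]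
      have : ∀ ξ : EuclideanSpace ℝ (Fin n), Phi n α (x - ξ) (t - τ) * Ff n T ξ τ = 0 := by
        intro ξ
        unfold Ff
        rw [if_neg (not_le.2 (lt_of_lt_of_le hτ (not_lt.1 ht))), mul_zero]
      simp [this]
    rw [this]
    exact zero_le


lemma Ff_meas (n : ℕ) {T : ℝ} (hT : 0 < T) : Measurable (Function.uncurry (Ff n T)) := by
  have heq : Function.uncurry (Ff n T) = fun q : EuclideanSpace ℝ (Fin n) × ℝ =>
      if 0 ≤ q.2 then Real.exp (1 * (q.2 + T)) *
        (Real.exp (Real.log (4 * Real.pi * (q.2 + T)) * (-(n : ℝ) / 2)) *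
          Real.exp (-‖q.1‖ ^ 2 / (4 * (q.2 + T)))) else 0 := by
    funext q
    show Ff n T q.1 q.2 = _
    unfold Ff
    split_ifs with h
    · rw [Phi_one n q.1 (by linarith : (0:ℝ) < q.2 + T)]
      unfold HK
      rw [Real.rpow_def_of_pos (by positivity)]
    · rfl
  rw [heq]
  refine Measurable.ite (measurableSet_le measurable_const measurable_snd) ?_ measurable_const
  refine Measurable.mul ((measurable_snd.add_const T).const_mul 1).exp (Measurable.mul ?_ ?_)
  · exact ((Real.measurable_log.comp ((measurable_snd.add_const T).const_mul
      (4 * Real.pi))).mul_const _).exp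
  · exact (((measurable_fst.norm.pow_const 2).neg).div
      ((measurable_snd.add_const T).const_mul 4)).exp

lemma Ff_nonneg (n : ℕ) {T : ℝ} (hT : 0 < T) (x : EuclideanSpace ℝ (Fin n)) (t : ℝ) :
    0 ≤ Ff n T x t := by
  unfold Ff
  split_ifs with h
  · have : (0:ℝ) < t + T := by linarith
    rw [Phi_one n x this]
    exact mul_nonneg (Real.exp_pos _).le (HK_pos n this x).le
  · exact le_refl 0

lemma Ff_bound (n : ℕ) {T : ℝ} (hT : 0 < T) (T' : ℝ) {x : EuclideanSpace ℝ (Fin n)} {t : ℝ}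
    (h0 : 0 ≤ t) (h1 : t < T') :
    Ff n T x t ≤ (Real.exp (max T' 0 + T) * (4 * Real.pi * T) ^ (-(n : ℝ) / 2)) *
      Real.exp (-(1 / (4 * (max T' 0 + T))) * ‖x‖ ^ 2) := by
  have hS : 0 < max T' 0 + T := by
    have := le_max_right T' 0; linarith
  have htT : (0:ℝ) < t + T := by linarith
  have htS : t + T ≤ max T' 0 + T := by
    have := le_max_left T' 0; linarith
  unfold Ff
  rw [if_pos h0, Phi_one n x htT]
  unfold HK
  have e1 : Real.exp (1 * (t + T)) ≤ Real.exp (max T' 0 + T) := by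
    rw [one_mul]; exact Real.exp_le_exp.2 htS
  have e2 : (4 * Real.pi * (t + T)) ^ (-(n : ℝ) / 2) ≤ (4 * Real.pi * T) ^ (-(n : ℝ) / 2) := by
    refine Real.rpow_le_rpow_of_nonpos (by positivity) (by nlinarith [Real.pi_pos]) ?_
    have : (0:ℝ) ≤ (n : ℝ) := Nat.cast_nonneg n
    linarith
  have e3 : Real.exp (-‖x‖ ^ 2 / (4 * (t + T))) ≤
      Real.exp (-(1 / (4 * (max T' 0 + T))) * ‖x‖ ^ 2) := by
    refine Real.exp_le_exp.2 ?_
    rw [neg_div, neg_mul, neg_le_neg_iff, one_div, inv_mul_eq_div]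
    gcongr
    all_goals first
      | exact sq_nonneg _
      | linarith
      | positivity
  calc Real.exp (1 * (t + T)) * ((4 * Real.pi * (t + T)) ^ (-(n : ℝ) / 2) *
        Real.exp (-‖x‖ ^ 2 / (4 * (t + T))))
      ≤ Real.exp (max T' 0 + T) * ((4 * Real.pi * T) ^ (-(n : ℝ) / 2) *
        Real.exp (-(1 / (4 * (max T' 0 + T))) * ‖x‖ ^ 2)) := by
        refine mul_le_mul e1 (mul_le_mul e2 e3 (Real.exp_pos _).le (by positivity)) ?_
          (Real.exp_pos _).le
        exact mul_nonneg (by positivity) (Real.exp_pos _).le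
    _ = _ := by ring

lemma Ff_memXp (n : ℕ) {T preal : ℝ} (hT : 0 < T) (hp : 1 ≤ preal) :
    MemXp n (ENNReal.ofReal preal) (Ff n T) := by
  refine ⟨Ff_meas n hT, fun T' => ?_⟩
  have hp0 : (0:ℝ) < preal := by linarith
  have hpne : ENNReal.ofReal preal ≠ 0 := by
    simp [ENNReal.ofReal_eq_zero]; linarith
  rw [eLpNorm_lt_top_iff_lintegral_rpow_enorm_lt_top hpne ENNReal.ofReal_ne_top,
    ENNReal.toReal_ofReal hp0.le]
  set S : ℝ := max T' 0 + T with hSdef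
  have hS : 0 < S := by have := le_max_right T' 0; simp only [hSdef]; linarith
  set cc : ℝ := 1 / (4 * S) with hccdef
  have hcc : 0 < cc := by positivity
  set M : ℝ := Real.exp S * (4 * Real.pi * T) ^ (-(n : ℝ) / 2) with hMdef
  have hM : 0 < M := by
    have : (0:ℝ) < 4 * Real.pi * T := by positivity
    positivity
  set H : EuclideanSpace ℝ (Fin n) × ℝ → ℝ≥0∞ := fun q =>
    (ENNReal.ofReal (M ^ preal) * ENNReal.ofReal (Real.exp (-cc * ‖q.1‖ ^ 2))) *
      (Set.Ico (0:ℝ) T').indicator (fun _ => (1:ℝ≥0∞)) q.2 with hHdef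
  have hFH : ∀ q : EuclideanSpace ℝ (Fin n) × ℝ, q ∈ {q : EuclideanSpace ℝ (Fin n) × ℝ | q.2 < T'} →
      (‖Function.uncurry (Ff n T) q‖₊ : ℝ≥0∞) ^ preal ≤ H q := by
    rintro ⟨x, t⟩ hq
    simp only [Set.mem_setOf_eq] at hq
    by_cases h0 : 0 ≤ t
    · have hind : (Set.Ico (0:ℝ) T').indicator (fun _ => (1:ℝ≥0∞)) t = 1 :=
        Set.indicator_of_mem (Set.mem_Ico.mpr ⟨h0, hq⟩) _
      have hval : Function.uncurry (Ff n T) (x, t) = Ff n T x t := rfl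
      rw [hHdef]
      simp only [hval, hind, mul_one]
      rw [← enorm_eq_nnnorm, Real.enorm_eq_ofReal (Ff_nonneg n hT x t),
        ENNReal.ofReal_rpow_of_nonneg (Ff_nonneg n hT x t) hp0.le,
        ← ENNReal.ofReal_mul (by positivity)]
      refine ENNReal.ofReal_le_ofReal ?_
      have hb := Ff_bound n hT T' (x := x) h0 hq
      calc Ff n T x t ^ preal ≤ (M * Real.exp (-cc * ‖x‖ ^ 2)) ^ preal := by
            refine Real.rpow_le_rpow (Ff_nonneg n hT x t) hb hp0.le
        _ = M ^ preal * Real.exp (-cc * ‖x‖ ^ 2 * preal) := by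
            rw [Real.mul_rpow hM.le (Real.exp_pos _).le, ← Real.exp_mul]
        _ ≤ M ^ preal * Real.exp (-cc * ‖x‖ ^ 2) := by
            refine mul_le_mul_of_nonneg_left (Real.exp_le_exp.2 ?_) (by positivity)
            nlinarith [mul_nonneg (mul_nonneg hcc.le (sq_nonneg ‖x‖)) (by linarith : (0:ℝ) ≤ preal - 1)]
    · have hval : Function.uncurry (Ff n T) (x, t) = Ff n T x t := rfl
      rw [hval]
      unfold Ff
      rw [if_neg h0]
      simp only [nnnorm_zero, ENNReal.coe_zero]
      rw [ENNReal.zero_rpow_of_pos hp0]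
      exact zero_le
  have hregion : MeasurableSet {q : EuclideanSpace ℝ (Fin n) × ℝ | q.2 < T'} :=
    measurableSet_lt measurable_snd measurable_const
  calc ∫⁻ q in {q : EuclideanSpace ℝ (Fin n) × ℝ | q.2 < T'},
        (‖Function.uncurry (Ff n T) q‖₊ : ℝ≥0∞) ^ preal
      ≤ ∫⁻ q in {q : EuclideanSpace ℝ (Fin n) × ℝ | q.2 < T'}, H q :=
        setLIntegral_mono' hregion hFH
    _ ≤ ∫⁻ q, H q := setLIntegral_le_lintegral _ _
    _ < ⊤ := by
        rw [hHdef]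
        have hmeasg : Measurable fun x : EuclideanSpace ℝ (Fin n) =>
            ENNReal.ofReal (M ^ preal) * ENNReal.ofReal (Real.exp (-cc * ‖x‖ ^ 2)) :=
          (ENNReal.measurable_ofReal.comp
            (((measurable_norm.pow_const 2).const_mul (-cc)).exp)).const_mul _
        have hmeasi : Measurable fun t : ℝ =>
            (Set.Ico (0:ℝ) T').indicator (fun _ => (1:ℝ≥0∞)) t :=
          measurable_const.indicator measurableSet_Ico
        rw [MeasureTheory.Measure.volume_eq_prod, lintegral_prod_mul hmeasg.aemeasurable
          hmeasi.aemeasurable]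
        have h1 : ∫⁻ x : EuclideanSpace ℝ (Fin n),
            ENNReal.ofReal (M ^ preal) * ENNReal.ofReal (Real.exp (-cc * ‖x‖ ^ 2))
            = ENNReal.ofReal (M ^ preal) * ENNReal.ofReal ((Real.pi / cc) ^ ((n : ℝ) / 2)) := by
          rw [lintegral_const_mul' _ _ ENNReal.ofReal_ne_top, gauss_lintegral n hcc]
        have h2 : ∫⁻ t : ℝ, (Set.Ico (0:ℝ) T').indicator (fun _ => (1:ℝ≥0∞)) t
            = volume (Set.Ico (0:ℝ) T') := by
          rw [lintegral_indicator measurableSet_Ico]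
          simp
        rw [h1, h2, Real.volume_Ico]
        exact ENNReal.mul_lt_top (ENNReal.mul_lt_top ENNReal.ofReal_lt_top
          ENNReal.ofReal_lt_top) ENNReal.ofReal_lt_top

theorem super_problem_linear_solution (n : ℕ) (hn : 1 ≤ n) (α T : ℝ)
    (hα : 0 < α) (hT : 0 < T) :
    ∃ a : ℝ, 0 < a ∧
      ∀ f : EuclideanSpace ℝ (Fin n) → ℝ → ℝ,
        (f = fun x t => if 0 ≤ t then Real.exp (a * (t + T)) * Phi n 1 x (t + T) else 0) →
        (∀ p : ℝ, 1 ≤ p → MemXp n (ENNReal.ofReal p) f) ∧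
        (∀ (x : EuclideanSpace ℝ (Fin n)) (t : ℝ), J n α f x t ≤ ENNReal.ofReal (f x t)) ∧
        (∀ (x : EuclideanSpace ℝ (Fin n)) (t : ℝ), t < 0 → f x t = 0) ∧
        ¬ (∀ᵐ q : EuclideanSpace ℝ (Fin n) × ℝ, f q.1 q.2 = 0) := by
  refine ⟨1, one_pos, fun f hf => ?_⟩
  have hfF : f = Ff n T := by rw [hf]; rfl
  refine ⟨fun p hp => ?_, fun x t => ?_, fun x t ht => ?_, fun hae => ?_⟩
  · rw [hfF]
    exact Ff_memXp n hT hp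
  · rw [hfF]
    exact J_le n hα hT x t
  · rw [hfF]
    unfold Ff
    rw [if_neg (not_le.2 ht)]
  · rw [ae_iff] at hae
    have hsub : (Set.univ : Set (EuclideanSpace ℝ (Fin n))) ×ˢ Set.Ici (0:ℝ)
        ⊆ {q : EuclideanSpace ℝ (Fin n) × ℝ | ¬ f q.1 q.2 = 0} := by
      rintro ⟨x, t⟩ ⟨-, ht⟩
      have ht' : (0:ℝ) ≤ t := ht
      have htT : (0:ℝ) < t + T := by linarith
      simp only [Set.mem_setOf_eq, hfF]
      unfold Ff
      rw [if_pos ht', Phi_one n x htT]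
      exact (mul_pos (Real.exp_pos _) (HK_pos n htT x)).ne'
    have h0 : (volume (Set.univ : Set (EuclideanSpace ℝ (Fin n)))) ≠ 0 := by
      have : (0:ℝ≥0∞) < volume (Set.univ : Set (EuclideanSpace ℝ (Fin n))) :=
        isOpen_univ.measure_pos volume ⟨0, trivial⟩
      exact this.ne'
    have hz : volume ((Set.univ : Set (EuclideanSpace ℝ (Fin n))) ×ˢ Set.Ici (0:ℝ)) = 0 :=
      le_antisymm (hae ▸ measure_mono hsub) zero_le
    rw [MeasureTheory.Measure.volume_eq_prod, Measure.prod_prod, Real.volume_Ici] at hz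
    exact (mul_ne_zero h0 ENNReal.top_ne_zero) hz
end

section
/- Let n ≥ 1, λ > 1, 0 < α < (n+2)/2·(1−1/λ), and p ∈ [1,∞). Define w(z) := exp(−λ|z|²/4)·(|z|² + 1)^{−λ((n+2)/2 − αλ/(λ−1))} for z ∈ ℝ^n, and f(x,t) := t^{−αλ/(λ−1)}·w(x/√t) for t > 0 and f(x,t) := 0 for t ≤ 0. Then f ∈ X^p if and only if α < (n+2)/(2p)·(1−1/λ). -/
open MeasureTheory Real Set
open scoped ENNReal

/-- The profile `w(z) = e^{-λ|z|²/4} (|z|²+1)^{-λ((n+2)/2 - αλ/(λ-1))}`. -/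
noncomputable def wProfile (n : ℕ) (α lam : ℝ) (z : EuclideanSpace ℝ (Fin n)) : ℝ :=
  Real.exp (-(lam * ‖z‖ ^ 2 / 4)) *
    (‖z‖ ^ 2 + 1) ^ (-(lam * (((n : ℝ) + 2) / 2 - α * lam / (lam - 1))))

/-- The self-similar function `f(x,t) = t^{-αλ/(λ-1)} w(x/√t)` for `t > 0`, `0` for `t ≤ 0`. -/
noncomputable def fSelfSim (n : ℕ) (α lam : ℝ) (x : EuclideanSpace ℝ (Fin n)) (t : ℝ) : ℝ :=
  if 0 < t then t ^ (-(α * lam / (lam - 1))) * wProfile n α lam ((Real.sqrt t)⁻¹ • x) else 0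

/-! ### Auxiliary lemmas -/

lemma lintegral_comp_inv_smul (n : ℕ) (g : EuclideanSpace ℝ (Fin n) → ℝ≥0∞) (hg : Measurable g)
    {c : ℝ} (hc : 0 < c) :
    ∫⁻ x, g (c⁻¹ • x) = ENNReal.ofReal (c ^ n) * ∫⁻ z, g z := by
  have hmeas : Measurable fun x : EuclideanSpace ℝ (Fin n) => c⁻¹ • x :=
    measurable_id.const_smul c⁻¹
  rw [← MeasureTheory.lintegral_map hg hmeas,
    Measure.map_addHaar_smul volume (inv_ne_zero hc.ne')]
  rw [lintegral_smul_measure]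
  congr 1
  rw [finrank_euclideanSpace_fin, ← inv_pow, inv_inv, abs_of_nonneg (by positivity)]

lemma integrable_gauss (n : ℕ) {b : ℝ} (hb : 0 < b) :
    Integrable (fun v : EuclideanSpace ℝ (Fin n) => Real.exp (-b * ‖v‖^2)) := by
  have h := (GaussianFourier.integrable_cexp_neg_mul_sq_norm_add
    (V := EuclideanSpace ℝ (Fin n)) (b := (b:ℂ)) (by simpa using hb) 0 0).norm
  simpa [Complex.norm_exp, neg_mul, ← Complex.ofReal_pow] using h

lemma wProfile_pos (n : ℕ) (α lam : ℝ) (z : EuclideanSpace ℝ (Fin n)) :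
    0 < wProfile n α lam z := by
  have h1 : (0:ℝ) < ‖z‖ ^ 2 + 1 := by positivity
  exact mul_pos (Real.exp_pos _) (Real.rpow_pos_of_pos h1 _)

lemma wProfile_continuous (n : ℕ) (α lam : ℝ) : Continuous (wProfile n α lam) := by
  unfold wProfile
  apply Continuous.mul
  · exact (((continuous_const.mul (continuous_norm.pow 2)).div_const 4).neg).rexp
  · refine Continuous.rpow_const ?_ fun z => Or.inl (by positivity)
    exact (continuous_norm.pow 2).add continuous_const

lemma wProfile_le (n : ℕ) (α lam : ℝ)
    (hm : 0 ≤ lam * (((n : ℝ) + 2) / 2 - α * lam / (lam - 1)))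
    (z : EuclideanSpace ℝ (Fin n)) :
    wProfile n α lam z ≤ Real.exp (-(lam/4) * ‖z‖ ^ 2) := by
  have h1 : (1:ℝ) ≤ ‖z‖ ^ 2 + 1 := by nlinarith [sq_nonneg ‖z‖]
  have h2 : (‖z‖ ^ 2 + 1) ^ (-(lam * (((n : ℝ) + 2) / 2 - α * lam / (lam - 1)))) ≤ 1 :=
    Real.rpow_le_one_of_one_le_of_nonpos h1 (by linarith)
  calc wProfile n α lam z ≤ Real.exp (-(lam * ‖z‖ ^ 2 / 4)) :=
        mul_le_of_le_one_right (Real.exp_pos _).le h2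
    _ = Real.exp (-(lam/4) * ‖z‖ ^ 2) := by ring_nf

lemma wpow_measurable (n : ℕ) (α lam p : ℝ) :
    Measurable (fun z : EuclideanSpace ℝ (Fin n) => ENNReal.ofReal (wProfile n α lam z ^ p)) := by
  exact (((wProfile_continuous n α lam).rpow_const
    (fun z => Or.inl (wProfile_pos n α lam z).ne')).measurable).ennreal_ofReal

lemma Iw_lt_top (n : ℕ) (α lam p : ℝ) (hlam : 0 < lam) (hp : 0 < p)
    (hm : 0 ≤ lam * (((n : ℝ) + 2) / 2 - α * lam / (lam - 1))) :
    (∫⁻ z : EuclideanSpace ℝ (Fin n), ENNReal.ofReal (wProfile n α lam z ^ p)) < ⊤ := by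
  have hb : 0 < p * (lam / 4) := by positivity
  calc (∫⁻ z : EuclideanSpace ℝ (Fin n), ENNReal.ofReal (wProfile n α lam z ^ p))
      ≤ ∫⁻ z : EuclideanSpace ℝ (Fin n), ENNReal.ofReal (Real.exp (-(p * (lam/4)) * ‖z‖ ^ 2)) := by
        apply lintegral_mono
        intro z
        apply ENNReal.ofReal_le_ofReal
        have h1 := wProfile_le n α lam hm z
        have h2 : wProfile n α lam z ^ p ≤ (Real.exp (-(lam/4) * ‖z‖ ^ 2)) ^ p :=
          Real.rpow_le_rpow (wProfile_pos n α lam z).le h1 hp.le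
        refine h2.trans_eq ?_
        rw [Real.rpow_def_of_pos (Real.exp_pos _), Real.log_exp]
        congr 1
        ring
    _ < ⊤ := (integrable_gauss n hb).lintegral_lt_top

lemma Iw_pos (n : ℕ) (α lam p : ℝ) :
    0 < (∫⁻ z : EuclideanSpace ℝ (Fin n), ENNReal.ofReal (wProfile n α lam z ^ p)) := by
  rw [lintegral_pos_iff_support (wpow_measurable n α lam p)]
  have : Function.support (fun z : EuclideanSpace ℝ (Fin n) => ENNReal.ofReal (wProfile n α lam z ^ p)) = univ := by
    ext z
    simp only [Function.mem_support, mem_univ, iff_true]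
    have := Real.rpow_pos_of_pos (wProfile_pos n α lam z) p
    simp [ENNReal.ofReal_eq_zero, not_le, this]
  rw [this]
  exact isOpen_univ.measure_pos volume ⟨0, trivial⟩

lemma fSelfSim_measurable (n : ℕ) (α lam : ℝ) :
    Measurable (Function.uncurry (fSelfSim n α lam)) := by
  unfold fSelfSim Function.uncurry
  have hset : MeasurableSet {q : EuclideanSpace ℝ (Fin n) × ℝ | 0 < q.2} :=
    measurableSet_lt measurable_const measurable_snd
  refine Measurable.ite hset (Measurable.mul ?_ ?_) measurable_const
  · fun_prop
  · exact (wProfile_continuous n α lam).measurable.comp (by fun_prop)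

lemma time_integral_iff {T c : ℝ} (hT : 0 < T) :
    (∫⁻ t in Ioo (0:ℝ) T, ENNReal.ofReal (t ^ c)) < ⊤ ↔ -1 < c := by
  have hcong : ∫⁻ t in Ioo (0:ℝ) T, ENNReal.ofReal (t ^ c)
      = ∫⁻ t in Ioo (0:ℝ) T, (‖t ^ c‖₊ : ℝ≥0∞) := by
    refine setLIntegral_congr_fun measurableSet_Ioo (fun t ht => ?_)
    rw [← enorm_eq_nnnorm, Real.enorm_eq_ofReal (Real.rpow_nonneg ht.1.le c)]
  rw [hcong, ← intervalIntegral.integrableOn_Ioo_rpow_iff hT]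
  constructor
  · intro h
    exact ⟨(by fun_prop : Measurable fun t : ℝ => t ^ c).aestronglyMeasurable, h⟩
  · intro h
    exact h.2

lemma inner_int (n : ℕ) (α lam p : ℝ) (hp : 0 < p) {t : ℝ} (ht : 0 < t) :
    (∫⁻ x : EuclideanSpace ℝ (Fin n), (‖fSelfSim n α lam x t‖₊ : ℝ≥0∞) ^ p)
      = ENNReal.ofReal (t ^ ((n:ℝ)/2 - (α * lam / (lam - 1)) * p)) *
        ∫⁻ z : EuclideanSpace ℝ (Fin n), ENNReal.ofReal (wProfile n α lam z ^ p) := by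
  have hst : 0 < Real.sqrt t := Real.sqrt_pos.2 ht
  have hpt : ∀ x : EuclideanSpace ℝ (Fin n),
      (‖fSelfSim n α lam x t‖₊ : ℝ≥0∞) ^ p
        = ENNReal.ofReal (t ^ (-(α * lam / (lam - 1)) * p)) *
          ENNReal.ofReal (wProfile n α lam ((Real.sqrt t)⁻¹ • x) ^ p) := by
    intro x
    rw [show fSelfSim n α lam x t
        = t ^ (-(α * lam / (lam - 1))) * wProfile n α lam ((Real.sqrt t)⁻¹ • x) from if_pos ht]
    have h0 : (0:ℝ) ≤ t ^ (-(α * lam / (lam - 1))) * wProfile n α lam ((Real.sqrt t)⁻¹ • x) :=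
      mul_nonneg (Real.rpow_nonneg ht.le _) (wProfile_pos n α lam _).le
    rw [← enorm_eq_nnnorm, Real.enorm_eq_ofReal h0, ENNReal.ofReal_rpow_of_nonneg h0 hp.le,
      Real.mul_rpow (Real.rpow_nonneg ht.le _) (wProfile_pos n α lam _).le,
      ← Real.rpow_mul ht.le,
      ENNReal.ofReal_mul (Real.rpow_nonneg ht.le _)]
  simp_rw [hpt]
  have hm2 : Measurable fun x : EuclideanSpace ℝ (Fin n) =>
      ENNReal.ofReal (wProfile n α lam ((Real.sqrt t)⁻¹ • x) ^ p) := by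
    exact (wpow_measurable n α lam p).comp (measurable_id.const_smul (Real.sqrt t)⁻¹)
  rw [lintegral_const_mul _ hm2]
  rw [lintegral_comp_inv_smul n (fun z => ENNReal.ofReal (wProfile n α lam z ^ p))
    (wpow_measurable n α lam p) hst]
  rw [← mul_assoc, ← ENNReal.ofReal_mul (Real.rpow_nonneg ht.le _)]
  congr 2
  have hsq : (Real.sqrt t) ^ n = t ^ ((n:ℝ)/2) := by
    rw [Real.sqrt_eq_rpow, ← Real.rpow_natCast (t ^ ((1:ℝ)/2)) n, ← Real.rpow_mul ht.le]
    congr 1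
    ring
  rw [hsq, ← Real.rpow_add ht]
  congr 1
  ring

lemma key_identity (n : ℕ) (α lam p : ℝ) (hp : 0 < p) (T : ℝ) :
    (∫⁻ q in {q : EuclideanSpace ℝ (Fin n) × ℝ | q.2 < T},
        (‖Function.uncurry (fSelfSim n α lam) q‖₊ : ℝ≥0∞) ^ p)
      = (∫⁻ t in Ioo (0:ℝ) T, ENNReal.ofReal (t ^ ((n:ℝ)/2 - (α*lam/(lam-1))*p)))
        * ∫⁻ z : EuclideanSpace ℝ (Fin n), ENNReal.ofReal (wProfile n α lam z ^ p) := by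
  set c := (n:ℝ)/2 - (α*lam/(lam-1))*p with hc
  set Iw := ∫⁻ z : EuclideanSpace ℝ (Fin n), ENNReal.ofReal (wProfile n α lam z ^ p) with hIw
  have hmeasF : Measurable fun q : EuclideanSpace ℝ (Fin n) × ℝ =>
      (‖Function.uncurry (fSelfSim n α lam) q‖₊ : ℝ≥0∞) ^ p := by
    have h := fSelfSim_measurable n α lam
    fun_prop
  have hs : {q : EuclideanSpace ℝ (Fin n) × ℝ | q.2 < T} = (univ ×ˢ Iio T) := by
    ext q; simp
  have hmeq : (volume : Measure (EuclideanSpace ℝ (Fin n) × ℝ)).restrict (univ ×ˢ Iio T)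
      = (volume : Measure (EuclideanSpace ℝ (Fin n))).prod (volume.restrict (Iio T)) := by
    rw [Measure.volume_eq_prod, ← Measure.prod_restrict, Measure.restrict_univ]
  rw [hs, hmeq]
  rw [MeasureTheory.lintegral_prod_symm _ hmeasF.aemeasurable]
  have hinner : ∀ t : ℝ,
      (∫⁻ x : EuclideanSpace ℝ (Fin n), (‖fSelfSim n α lam x t‖₊ : ℝ≥0∞) ^ p)
        = (Ioi (0:ℝ)).indicator (fun t => ENNReal.ofReal (t ^ c) * Iw) t := by
    intro t
    by_cases ht : 0 < t
    · rw [Set.indicator_of_mem (mem_Ioi.mpr ht)]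
      exact inner_int n α lam p hp ht
    · rw [Set.indicator_of_notMem (by simpa using ht)]
      have h0 : ∀ x : EuclideanSpace ℝ (Fin n), fSelfSim n α lam x t = 0 := fun x => if_neg ht
      simp only [h0, nnnorm_zero, ENNReal.coe_zero]
      rw [ENNReal.zero_rpow_of_pos hp]
      simp
  simp_rw [Function.uncurry_apply_pair, hinner]
  rw [lintegral_indicator measurableSet_Ioi, Measure.restrict_restrict measurableSet_Ioi,
    Set.Ioi_inter_Iio]
  exact lintegral_mul_const Iw (by fun_prop)

lemma arith_iff (n : ℕ) (α lam p : ℝ) (hlam : 1 < lam) (hp : 0 < p) :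
    (-1 < (n:ℝ)/2 - (α*lam/(lam-1))*p) ↔ (α < ((n : ℝ) + 2) / (2 * p) * (1 - 1 / lam)) := by
  have hl0 : (0:ℝ) < lam := by linarith
  have hl1 : (0:ℝ) < lam - 1 := by linarith
  have hEq : ((n:ℝ) + 2) / (2 * p) * (1 - 1 / lam) = (((n:ℝ)+2)*(lam-1))/(2*p*lam) := by
    field_simp
  rw [hEq, lt_div_iff₀ (by positivity : (0:ℝ) < 2*p*lam), div_mul_eq_mul_div]
  constructor
  · intro h
    have h2 : α*lam*p/(lam-1) < (n:ℝ)/2 + 1 := by linarith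
    rw [div_lt_iff₀ hl1] at h2
    nlinarith
  · intro h
    have h2 : α*lam*p < ((n:ℝ)/2+1)*(lam-1) := by nlinarith
    rw [← div_lt_iff₀ hl1] at h2
    linarith

theorem selfsimilar_memXp_iff (n : ℕ) (hn : 1 ≤ n) (α lam p : ℝ)
    (hlam : 1 < lam) (hα0 : 0 < α) (hα1 : α < ((n : ℝ) + 2) / 2 * (1 - 1 / lam))
    (hp : 1 ≤ p) :
    MemXp n (ENNReal.ofReal p) (fSelfSim n α lam) ↔
      α < ((n : ℝ) + 2) / (2 * p) * (1 - 1 / lam) := by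
  have hp0 : (0:ℝ) < p := by linarith
  have hl0 : (0:ℝ) < lam := by linarith
  have hl1 : (0:ℝ) < lam - 1 := by linarith
  have hβ2 : α * lam / (lam - 1) < ((n:ℝ)+2)/2 := by
    rw [div_lt_iff₀ hl1]
    have h2 := mul_lt_mul_of_pos_right hα1 hl0
    have h3 : ((n:ℝ)+2)/2*(1-1/lam)*lam = ((n:ℝ)+2)/2*(lam-1) := by
      field_simp
    linarith
  have hm : 0 ≤ lam * (((n : ℝ) + 2) / 2 - α * lam / (lam - 1)) := by nlinarith
  set Iw := ∫⁻ z : EuclideanSpace ℝ (Fin n), ENNReal.ofReal (wProfile n α lam z ^ p) with hIwdef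
  have hIwpos : 0 < Iw := Iw_pos n α lam p
  have hIwtop : Iw < ⊤ := Iw_lt_top n α lam p hl0 hp0 hm
  have hPne : (ENNReal.ofReal p) ≠ 0 := by
    simp [ENNReal.ofReal_eq_zero, not_le, hp0]
  have hPtop : (ENNReal.ofReal p) ≠ ⊤ := ENNReal.ofReal_ne_top
  have hPto : (ENNReal.ofReal p).toReal = p := ENNReal.toReal_ofReal hp0.le
  set c := (n:ℝ)/2 - (α*lam/(lam-1))*p with hc
  have hElp : ∀ T : ℝ,
      (eLpNorm (Function.uncurry (fSelfSim n α lam)) (ENNReal.ofReal p)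
        (volume.restrict {q : EuclideanSpace ℝ (Fin n) × ℝ | q.2 < T}) < ⊤)
      ↔ (∫⁻ t in Ioo (0:ℝ) T, ENNReal.ofReal (t ^ c)) * Iw < ⊤ := by
    intro T
    rw [eLpNorm_lt_top_iff_lintegral_rpow_enorm_lt_top hPne hPtop, hPto]
    simp only [enorm_eq_nnnorm]
    rw [key_identity n α lam p hp0 T]
  constructor
  · intro hmem
    rw [← arith_iff n α lam p hlam hp0, ← time_integral_iff (T := 1) one_pos]
    have h1 := (hElp 1).mp (hmem.2 1)
    exact ENNReal.lt_top_of_mul_ne_top_left h1.ne hIwpos.ne'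
  · intro hα
    refine ⟨fSelfSim_measurable n α lam, fun T => ?_⟩
    rw [hElp T]
    rcases le_or_gt T 0 with hT | hT
    · rw [Set.Ioo_eq_empty (by intro h; exact absurd (h.trans_le hT) (lt_irrefl 0))]
      simp
    · have hfin : (∫⁻ t in Ioo (0:ℝ) T, ENNReal.ofReal (t ^ c)) < ⊤ :=
        (time_integral_iff hT).mpr ((arith_iff n α lam p hlam hp0).mpr hα)
      exact ENNReal.mul_lt_top hfin hIwtop
end
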